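/- arXiv:1506.00157 — 2 statements merged into one kernel-verified Lean document; each statement's English description precedes it below -/
import Mathlib

section
/- Let d ≥ 2 and k ∈ {1,…,d−1}, and let φ(t) = (1−|t|²)^{1/2} for |t| ≤ 1. For every τ > 0 and ε > 0 there exists η > 0 with the following property: for every τ-admissible triple (r₁,r₂,r₃) of positive reals there is a measurable partition 𝔹_{d−k} = 𝒢 ∪ ℬ of the closed unit ball of ℝ^{d−k} with |ℬ| < ε such that for every x'₃ ∈ 𝒢, the (d−k)-dimensional Lebesgue measure of the set of x'₁ ∈ ℝ^{d−k} such that, setting x'₂ = −(r₁x'₁ + r₃x'₃)/r₂, one has |x'₁| ≤ 1, |x'₂| ≤ 1, and the triple (r₁φ(x'₁), r₂φ(x'₂), r₃φ(x'₃)) is η-admissible, is at least η. -/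
open MeasureTheory Metric Filter
open scoped ENNReal Pointwise Topology

noncomputable section

abbrev Euc (d : ℕ) : Type := EuclideanSpace ℝ (Fin d)

/-- The Riesz–Sobolev trilinear form
`𝒯(E₁,E₂,E₃) = ∫∫ 1_{E₁}(x) 1_{E₂}(y) 1_{E₃}(-x-y) dx dy`. -/
noncomputable def Ttri {d : ℕ} (E₁ E₂ E₃ : Set (Euc d)) : ℝ :=
  ∫ x : Euc d, ∫ y : Euc d,
    E₁.indicator (fun _ => (1:ℝ)) x * E₂.indicator (fun _ => (1:ℝ)) y *
      E₃.indicator (fun _ => (1:ℝ)) (-x - y)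

/-- `E^•` : the closed ball centered at `0` with the same volume as `E`. -/
noncomputable def ballSym {d : ℕ} (E : Set (Euc d)) : Set (Euc d) :=
  Metric.closedBall 0
    (((volume E).toReal / (volume (Metric.closedBall (0 : Euc d) 1)).toReal) ^ (1 / (d:ℝ)))

/-- `τ`-admissibility of an ordered triple of positive reals. -/
def TauAdm (τ r₁ r₂ r₃ : ℝ) : Prop :=
  0 < r₁ ∧ 0 < r₂ ∧ 0 < r₃ ∧
  r₁ + r₂ ≥ r₃ + τ * max r₁ (max r₂ r₃) ∧
  r₂ + r₃ ≥ r₁ + τ * max r₁ (max r₂ r₃) ∧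
  r₁ + r₃ ≥ r₂ + τ * max r₁ (max r₂ r₃)

/-- `τ`-admissibility of an ordered triple of sets. -/
def TauAdmSets (d : ℕ) (τ : ℝ) (E₁ E₂ E₃ : Set (Euc d)) : Prop :=
  TauAdm τ ((volume E₁).toReal ^ (1/(d:ℝ))) ((volume E₂).toReal ^ (1/(d:ℝ)))
    ((volume E₃).toReal ^ (1/(d:ℝ)))

/-- Strict admissibility of a triple of positive reals. -/
def StrictAdm (r₁ r₂ r₃ : ℝ) : Prop :=
  0 < r₁ ∧ 0 < r₂ ∧ 0 < r₃ ∧ r₁ < r₂ + r₃ ∧ r₂ < r₁ + r₃ ∧ r₃ < r₁ + r₂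

/-- An ellipsoid: image of the closed unit ball under an invertible affine map. -/
def IsEllipsoid (d : ℕ) (S : Set (Euc d)) : Prop :=
  ∃ (A : Euc d ≃ₗ[ℝ] Euc d) (v : Euc d),
    S = (fun x => A x + v) '' Metric.closedBall 0 1

/-- An ellipsoid centered at `0`. -/
def IsCenteredEllipsoid (d : ℕ) (S : Set (Euc d)) : Prop :=
  ∃ A : Euc d ≃ₗ[ℝ] Euc d, S = (fun x => A x) '' Metric.closedBall 0 1

/-- Assemble a point of `ℝ^d` from its first `d-1` coordinates and its last one. -/
def join (d : ℕ) (x' : Euc (d-1)) (t : ℝ) : Euc d :=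
  WithLp.toLp 2 (fun i => if h : (i:ℕ) < d - 1 then x' ⟨i, h⟩ else t)

/-- The first `d-1` coordinates. -/
def projHead (d : ℕ) (x : Euc d) : Euc (d-1) :=
  WithLp.toLp 2 (fun i => x ⟨i, lt_of_lt_of_le i.2 (Nat.sub_le d 1)⟩)

/-- The last coordinate. -/
def lastC (d : ℕ) (x : Euc d) : ℝ :=
  if h : 0 < d then x ⟨d-1, Nat.sub_lt h one_pos⟩ else 0

/-- Vertical slice `E^{x'} = {t : (x',t) ∈ E}`. -/
def sliceV (d : ℕ) (E : Set (Euc d)) (x' : Euc (d-1)) : Set ℝ :=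
  {t : ℝ | join d x' t ∈ E}

/-- Horizontal slice `E_t = {y' : (y',t) ∈ E}`. -/
def sliceH (d : ℕ) (E : Set (Euc d)) (t : ℝ) : Set (Euc (d-1)) :=
  {y' | join d y' t ∈ E}

/-- Steiner symmetrization in the last coordinate. -/
noncomputable def steiner (d : ℕ) (E : Set (Euc d)) : Set (Euc d) :=
  {x | ∃ x' t, x = join d x' t ∧ 0 < volume (sliceV d E x') ∧
      ENNReal.ofReal (2 * |t|) ≤ volume (sliceV d E x')}

/-- Schwarz symmetrization in the first `d-1` coordinates. -/
noncomputable def schwarz (d : ℕ) (E : Set (Euc d)) : Set (Euc d) :=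
  {x | ∃ x' t, x = join d x' t ∧ 0 < volume (sliceH d E t) ∧
      ENNReal.ofReal
        ((volume (Metric.closedBall (0 : Euc (d-1)) 1)).toReal * ‖x'‖ ^ (d-1))
        ≤ volume (sliceH d E t)}

/-- `E^{†★} = (E^†)^★`. -/
noncomputable def dagStar (d : ℕ) (E : Set (Euc d)) : Set (Euc d) :=
  steiner d (schwarz d E)

/-- `E'_k = {x' : 2^k ≤ |E^{x'}| < 2^{k+1}}`. -/
noncomputable def layerBase (d : ℕ) (E : Set (Euc d)) (k : ℤ) : Set (Euc (d-1)) :=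
  {x' | ENNReal.ofReal ((2:ℝ) ^ k) ≤ volume (sliceV d E x') ∧
        volume (sliceV d E x') < ENNReal.ofReal ((2:ℝ) ^ (k+1))}

/-- `E_k = {x ∈ E : x' ∈ E'_k}`. -/
noncomputable def layer (d : ℕ) (E : Set (Euc d)) (k : ℤ) : Set (Euc d) :=
  {x ∈ E | projHead d x ∈ layerBase d E k}

/-- A special dilation `(x₁,…,x_d) ↦ (r x₁,…, r x_{d-1}, ρ x_d)`. -/
def spDil (d : ℕ) (r ρ : ℝ) (x : Euc d) : Euc d :=
  WithLp.toLp 2 (fun i => if (i:ℕ) < d - 1 then r * x i else ρ * x i)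

/-- A vertical skew-shift `(x', x_d) ↦ (x', x_d + ℓ(x'))`. -/
noncomputable def skewShift (d : ℕ) (ℓ : Euc (d-1) →ᵃ[ℝ] ℝ) (x : Euc d) : Euc d :=
  join d (projHead d x) (lastC d x + ℓ (projHead d x))

/-- Assemble a point of `ℝ^d = ℝ^{d-k} × ℝ^k`. -/
def joinP (d k : ℕ) (y : Euc (d-k)) (z : Euc k) : Euc d :=
  WithLp.toLp 2 (fun i => if h : (i:ℕ) < d - k then y ⟨i, h⟩
    else if h2 : (i:ℕ) - (d-k) < k then z ⟨(i:ℕ) - (d-k), h2⟩ else 0)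

/-- Slice `E^{y} = {z ∈ ℝ^k : (y,z) ∈ E}`. -/
def sliceK (d k : ℕ) (E : Set (Euc d)) (y : Euc (d-k)) : Set (Euc k) :=
  {z | joinP d k y z ∈ E}

/-- Projection `π(E) = {y : E^y ≠ ∅}`. -/
def projK (d k : ℕ) (E : Set (Euc d)) : Set (Euc (d-k)) :=
  {y | (sliceK d k E y).Nonempty}

/-- The closed ball centered at `0` of prescribed volume `γ` (a point if `γ = 0`). -/
noncomputable def ballOfVol (d : ℕ) (γ : ℝ) : Set (Euc d) :=
  Metric.closedBall 0
    ((γ / (volume (Metric.closedBall (0 : Euc d) 1)).toReal) ^ (1/(d:ℝ)))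

/-- `Λ_d(γ₁,γ₂,γ₃) = 𝒯(B₁,B₂,B₃)` for balls of volumes `γ_j` centered at `0`. -/
noncomputable def Lam (d : ℕ) (γ₁ γ₂ γ₃ : ℝ) : ℝ :=
  Ttri (ballOfVol d γ₁) (ballOfVol d γ₂) (ballOfVol d γ₃)

/-- `rℰ + v`. -/
def scaleShift (d : ℕ) (r : ℝ) (v : Euc d) (S : Set (Euc d)) : Set (Euc d) :=
  (fun x => r • x + v) '' S

lemma tauAdm_mono {η η' s₁ s₂ s₃ : ℝ} (h : η ≤ η') (H : TauAdm η' s₁ s₂ s₃) :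
    TauAdm η s₁ s₂ s₃ := by
  obtain ⟨h1, h2, h3, h4, h5, h6⟩ := H
  have hm : (0:ℝ) ≤ max s₁ (max s₂ s₃) := le_trans h1.le (le_max_left _ _)
  have := mul_le_mul_of_nonneg_right h hm
  exact ⟨h1, h2, h3, by linarith, by linarith, by linarith⟩

lemma tauAdm_scale_mp {η c a b e : ℝ} (hc : 0 < c) (H : TauAdm η a b e) :
    TauAdm η (c*a) (c*b) (c*e) := by
  obtain ⟨h1, h2, h3, h4, h5, h6⟩ := H
  have hmax : max (c*a) (max (c*b) (c*e)) = c * max a (max b e) := by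
    rw [mul_max_of_nonneg _ _ hc.le, mul_max_of_nonneg _ _ hc.le]
  refine ⟨mul_pos hc h1, mul_pos hc h2, mul_pos hc h3, ?_, ?_, ?_⟩ <;>
    rw [hmax] <;> nlinarith

lemma tauAdm_scale {η c a b e : ℝ} (hc : 0 < c) :
    TauAdm η (c*a) (c*b) (c*e) ↔ TauAdm η a b e := by
  constructor
  · intro H
    have := tauAdm_scale_mp (inv_pos.mpr hc) H
    simpa [inv_mul_cancel_left₀ hc.ne'] using this
  · exact tauAdm_scale_mp hc

set_option maxHeartbeats 1000000 in
lemma core1D {r₁ r₂ r₃ m : ℝ} (h1 : 0 < r₁) (h2 : 0 < r₂) (h3 : 0 < r₃)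
    (t1 : r₁ < r₂ + r₃) (t2 : r₂ < r₁ + r₃) (t3 : r₃ < r₁ + r₂)
    (hm0 : 0 ≤ m) (hm1 : m < 1) :
    ∃ a : ℝ, |a| < 1 ∧ |r₁*a + r₃*m| < r₂ ∧
      StrictAdm (r₁ * Real.sqrt (1 - a^2)) (Real.sqrt (r₂^2 - (r₁*a + r₃*m)^2))
        (r₃ * Real.sqrt (1 - m^2)) := by
  have hrm : r₃ * m ≤ r₃ := by nlinarith
  have hrm0 : 0 ≤ r₃ * m := mul_nonneg h3.le hm0
  set A := Real.sqrt (1 - m^2) with hA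
  have hA2 : A^2 = 1 - m^2 := Real.sq_sqrt (by nlinarith)
  have hApos : 0 < A := Real.sqrt_pos.mpr (by nlinarith)
  set s₃ := r₃ * A with hs₃
  have hs₃pos : 0 < s₃ := mul_pos h3 hApos
  set f : ℝ → ℝ := fun a => r₁ * Real.sqrt (1 - a^2) with hf
  set g : ℝ → ℝ := fun a => Real.sqrt (r₂^2 - (r₁*a + r₃*m)^2) with hg
  have hfc : Continuous f := by
    apply Continuous.mul continuous_const
    exact Real.continuous_sqrt.comp (by continuity)
  have hgc : Continuous g := Real.continuous_sqrt.comp (by continuity)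
  set aL := max (-1 : ℝ) ((-r₂ - r₃*m)/r₁) with haL
  set aR := min (1 : ℝ) ((r₂ - r₃*m)/r₁) with haR
  have hLR : aL < aR := by
    rw [haL, haR]
    apply max_lt
    · apply lt_min (by norm_num)
      rw [lt_div_iff₀ h1]; nlinarith
    · apply lt_min
      · rw [div_lt_iff₀ h1]; nlinarith
      · rw [div_lt_div_iff_of_pos_right h1]; nlinarith
  have hmem : ∀ a, aL < a → a < aR → |a| < 1 ∧ |r₁*a + r₃*m| < r₂ := by
    intro a ha hb
    have h₁ : (-1:ℝ) < a := lt_of_le_of_lt (le_max_left _ _) ha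
    have h₂ : a < 1 := lt_of_lt_of_le hb (min_le_left _ _)
    have h₃ : (-r₂ - r₃*m)/r₁ < a := lt_of_le_of_lt (le_max_right _ _) ha
    have h₄ : a < (r₂ - r₃*m)/r₁ := lt_of_lt_of_le hb (min_le_right _ _)
    rw [div_lt_iff₀ h1] at h₃
    rw [lt_div_iff₀ h1] at h₄
    constructor
    · exact abs_lt.mpr ⟨h₁, h₂⟩
    · exact abs_lt.mpr ⟨by nlinarith, by nlinarith⟩
  have hfpos : ∀ a, |a| < 1 → 0 < f a := by
    intro a ha
    have := abs_lt.mp ha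
    exact mul_pos h1 (Real.sqrt_pos.mpr (by nlinarith))
  have hgpos : ∀ a, |r₁*a + r₃*m| < r₂ → 0 < g a := by
    intro a ha
    have := abs_lt.mp ha
    exact Real.sqrt_pos.mpr (by nlinarith)
  -- the three witness points
  have hq3 : ∃ a, aL < a ∧ a < aR ∧ s₃ < f a + g a := by
    have h12 : 0 < r₁ + r₂ := by linarith
    refine ⟨-(r₃*m)/(r₁+r₂), ?_, ?_, ?_⟩
    · rw [haL]
      apply max_lt
      · rw [lt_div_iff₀ h12]; nlinarith
      · rw [div_lt_div_iff₀ h1 h12]; nlinarith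
    · rw [haR]
      apply lt_min
      · rw [div_lt_iff₀ h12]; nlinarith
      · rw [div_lt_div_iff₀ h12 h1]; nlinarith
    · set q := -(r₃*m)/(r₁+r₂) with hq
      set cc := (r₃*m)/(r₁+r₂) with hcc
      have hccm : (r₁+r₂) * cc = r₃ * m := by rw [hcc]; field_simp
      have hcc0 : 0 ≤ cc := div_nonneg hrm0 h12.le
      have hcc1 : cc < 1 := (div_lt_one h12).mpr (by linarith)
      have hqc : q = -cc := by rw [hq, hcc, neg_div]
      have hw : r₁ * q + r₃ * m = r₂ * cc := by
        rw [hqc, hcc]; field_simp; ring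
      set B := Real.sqrt (1 - cc^2) with hB
      have hB2 : B ^ 2 = 1 - cc^2 := Real.sq_sqrt (by nlinarith)
      have hBpos : 0 < B := Real.sqrt_pos.mpr (by nlinarith)
      have hfq : f q = r₁ * B := by
        rw [hf]; simp only; rw [hqc, neg_sq]
      have hgq : g q = r₂ * B := by
        rw [hg]; simp only; rw [hw]
        rw [show r₂^2 - (r₂*cc)^2 = r₂^2 * (1 - cc^2) by ring]
        rw [Real.sqrt_mul (sq_nonneg r₂), Real.sqrt_sq h2.le]
      rw [hfq, hgq, ← add_mul]
      have hsq : ((r₁+r₂)*cc)^2 = (r₃*m)^2 := by rw [hccm]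
      have h2' : s₃ ^ 2 < ((r₁+r₂)*B)^2 := by
        have e1 : ((r₁+r₂)*B)^2 = (r₁+r₂)^2 - (r₃*m)^2 := by
          rw [mul_pow, hB2]; linear_combination -hsq
        have e2 : s₃^2 = r₃^2 * (1 - m^2) := by rw [hs₃, mul_pow, hA2]
        nlinarith [e1, e2, mul_pos (show (0:ℝ) < r₁+r₂-r₃ by linarith) (show (0:ℝ) < r₁+r₂+r₃ by linarith)]
      exact lt_of_pow_lt_pow_left₀ 2 (mul_nonneg h12.le hBpos.le) h2'
  have hq1 : ∃ a, aL < a ∧ a < aR ∧ f a < g a + s₃ := by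
    by_cases hA1 : r₂ + r₃*m < r₁
    · have hqnum : m*(r₂+r₃) < r₁ := by nlinarith
      refine ⟨-(m*(r₂+r₃))/r₁, ?_, ?_, ?_⟩
      · rw [haL]
        apply max_lt
        · rw [lt_div_iff₀ h1]; nlinarith
        · rw [div_lt_div_iff_of_pos_right h1]; nlinarith
      · rw [haR]
        apply lt_min
        · rw [div_lt_iff₀ h1]; nlinarith
        · rw [div_lt_div_iff_of_pos_right h1]; nlinarith
      · set q := -(m*(r₂+r₃))/r₁ with hq
        have hq1' : r₁ * q = -(m*(r₂+r₃)) := by rw [hq]; field_simp; try ring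
        have hw : r₁ * q + r₃ * m = -(r₂ * m) := by rw [hq1']; ring
        have hgq : g q = r₂ * A := by
          rw [hg]; simp only; rw [hw]
          rw [show r₂^2 - (-(r₂*m))^2 = r₂^2 * (1 - m^2) by ring]
          rw [Real.sqrt_mul (sq_nonneg r₂), Real.sqrt_sq h2.le, ← hA]
        have hq2' : 1 - q^2 = (r₁^2 - (m*(r₂+r₃))^2)/r₁^2 := by
          rw [hq]; field_simp; try ring
        have hqabs : |q| < 1 := by
          rw [hq, abs_div, abs_of_pos h1, div_lt_one h1, abs_neg,
            abs_of_nonneg (by nlinarith : (0:ℝ) ≤ m*(r₂+r₃))]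
          exact hqnum
        have hfq2 : (f q)^2 = r₁^2 - (m*(r₂+r₃))^2 := by
          rw [hf]; simp only
          rw [mul_pow, Real.sq_sqrt (by nlinarith [abs_lt.mp hqabs, sq_abs q] : (0:ℝ) ≤ 1 - q^2), hq2']
          field_simp
        have hfq0 : 0 ≤ f q := mul_nonneg h1.le (Real.sqrt_nonneg _)
        have key : f q < (r₂ + r₃) * A := by
          apply lt_of_pow_lt_pow_left₀ 2 (mul_nonneg (by linarith) hApos.le)
          nlinarith [hfq2, hA2, mul_pos (show (0:ℝ) < r₂+r₃-r₁ by linarith) (show (0:ℝ) < r₂+r₃+r₁ by linarith)]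
        rw [hgq]
        rw [hs₃]
        nlinarith
    · push_neg at hA1
      have haL1 : aL = -1 := by
        rw [haL]
        apply max_eq_left
        rw [div_le_iff₀ h1]; nlinarith
      have hXpos : 0 < (r₃*A/r₁)^2/4 :=
        div_pos (pow_pos (div_pos (mul_pos h3 hApos) h1) 2) (by norm_num)
      set ι := min ((aR + 1)/2) ((r₃*A/r₁)^2/4) with hι
      have hι0 : 0 < ι := lt_min (by rw [haL1] at hLR; linarith) hXpos
      have hι1 : ι ≤ (aR+1)/2 := min_le_left _ _
      have hι2 : ι ≤ (r₃*A/r₁)^2/4 := min_le_right _ _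
      refine ⟨-1 + ι, by rw [haL1]; linarith, by linarith, ?_⟩
      have hga : 0 ≤ g (-1+ι) := Real.sqrt_nonneg _
      have hfa : f (-1+ι) < s₃ := by
        have haR1 : aR ≤ 1 := min_le_left _ _
        have harg : 1 - (-1+ι)^2 < (r₃*A/r₁)^2 := by nlinarith
        have : Real.sqrt (1 - (-1+ι)^2) < r₃*A/r₁ :=
          (Real.sqrt_lt' (div_pos (mul_pos h3 hApos) h1)).mpr harg
        calc f (-1+ι) = r₁ * Real.sqrt (1 - (-1+ι)^2) := rfl
          _ < r₁ * (r₃*A/r₁) := by exact (mul_lt_mul_iff_right₀ h1).mpr this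
          _ = s₃ := by rw [hs₃]; field_simp
      linarith
  have hq2 : ∃ a, aL < a ∧ a < aR ∧ g a < f a + s₃ := by
    by_cases hB1 : m*(r₁+r₃) < r₂
    · refine ⟨m, ?_, ?_, ?_⟩
      · rw [haL]
        apply max_lt (by linarith)
        apply lt_of_lt_of_le _ hm0
        apply div_neg_of_neg_of_pos _ h1
        nlinarith
      · rw [haR]
        apply lt_min hm1
        rw [lt_div_iff₀ h1]; nlinarith
      · have hw : r₁ * m + r₃ * m = m * (r₁+r₃) := by ring
        have hfm : f m = r₁ * A := by rw [hf]
        have hgm0 : 0 ≤ g m := Real.sqrt_nonneg _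
        have hgm2 : (g m)^2 = r₂^2 - (m*(r₁+r₃))^2 := by
          rw [hg]; simp only; rw [hw]
          exact Real.sq_sqrt (by nlinarith [mul_nonneg hm0 (show (0:ℝ) ≤ r₁+r₃ by linarith)])
        have key : g m < (r₁ + r₃) * A := by
          apply lt_of_pow_lt_pow_left₀ 2 (mul_nonneg (by linarith) hApos.le)
          nlinarith [hgm2, hA2, mul_pos (show (0:ℝ) < r₁+r₃-r₂ by linarith) (show (0:ℝ) < r₁+r₃+r₂ by linarith)]
        rw [hfm, hs₃]
        nlinarith
    · push_neg at hB1
      have haR1 : aR = (r₂ - r₃*m)/r₁ := by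
        rw [haR]
        apply min_eq_right
        rw [div_le_iff₀ h1]; nlinarith
      have hs2pos : 0 < s₃^2/(4*r₁*r₂) :=
        div_pos (pow_pos hs₃pos 2) (by positivity)
      set ι := min ((aR - aL)/2) (s₃^2/(4*r₁*r₂)) with hι
      have hι0 : 0 < ι := lt_min (by linarith) hs2pos
      have hι1 : ι ≤ (aR - aL)/2 := min_le_left _ _
      have hι2 : ι ≤ s₃^2/(4*r₁*r₂) := min_le_right _ _
      refine ⟨aR - ι, by linarith, by linarith, ?_⟩
      have hw : r₁ * (aR - ι) + r₃ * m = r₂ - r₁*ι := by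
        rw [haR1]; field_simp; ring
      have hfa : 0 ≤ f (aR - ι) := mul_nonneg h1.le (Real.sqrt_nonneg _)
      have hga : g (aR - ι) < s₃ := by
        rw [hg]; simp only; rw [hw]
        apply (Real.sqrt_lt' hs₃pos).mpr
        have : ι ≤ s₃^2/(4*r₁*r₂) := hι2
        rw [le_div_iff₀ (by positivity : (0:ℝ) < 4*r₁*r₂)] at this
        nlinarith [mul_pos h1 hι0]
      linarith
  -- connectedness argument
  obtain ⟨a₁, ha₁L, ha₁R, ha₁⟩ := hq1
  obtain ⟨a₂, ha₂L, ha₂R, ha₂⟩ := hq2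
  obtain ⟨a₃, ha₃L, ha₃R, ha₃⟩ := hq3
  by_contra hcon
  push_neg at hcon
  have hcon' : ∀ a : ℝ, |a| < 1 → |r₁*a + r₃*m| < r₂ → ¬ StrictAdm (f a) (g a) s₃ := hcon
  set lo := min (min a₁ a₂) a₃ with hlo
  set hi := max (max a₁ a₂) a₃ with hhi
  have hloL : aL < lo := lt_min (lt_min ha₁L ha₂L) ha₃L
  have hhiR : hi < aR := max_lt (max_lt ha₁R ha₂R) ha₃R
  have hIm : ∀ a ∈ Set.Icc lo hi, |a| < 1 ∧ |r₁*a + r₃*m| < r₂ := by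
    intro a ha
    exact hmem a (lt_of_lt_of_le hloL ha.1) (lt_of_le_of_lt ha.2 hhiR)
  set T1 : Set ℝ := {a | g a + s₃ ≤ f a} with hT1
  set T2 : Set ℝ := {a | f a + s₃ ≤ g a} with hT2
  set T3 : Set ℝ := {a | f a + g a ≤ s₃} with hT3
  have hT1c : IsClosed T1 := isClosed_le (hgc.add continuous_const) hfc
  have hT2c : IsClosed T2 := isClosed_le (hfc.add continuous_const) hgc
  have hT3c : IsClosed T3 := isClosed_le (hfc.add hgc) continuous_const
  have hcover : Set.Icc lo hi ⊆ T1 ∪ (T2 ∪ T3) := by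
    intro a ha
    obtain ⟨hab, haw⟩ := hIm a ha
    by_contra hT
    simp only [Set.mem_union, hT1, hT2, hT3, Set.mem_setOf_eq, not_or, not_le] at hT
    exact hcon' a hab haw ⟨hfpos a hab, hgpos a haw, hs₃pos,
      by linarith [hT.1], by linarith [hT.2.1], by linarith [hT.2.2]⟩
  have hpc : IsPreconnected (Set.Icc lo hi) := isPreconnected_Icc
  have ha₁I : a₁ ∈ Set.Icc lo hi :=
    ⟨le_trans (min_le_left _ _) (min_le_left _ _), le_trans (le_max_left _ _) (le_max_left _ _)⟩
  have ha₂I : a₂ ∈ Set.Icc lo hi :=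
    ⟨le_trans (min_le_left _ _) (min_le_right _ _), le_trans (le_max_right _ _) (le_max_left _ _)⟩
  have ha₃I : a₃ ∈ Set.Icc lo hi := ⟨min_le_right _ _, le_max_right _ _⟩
  -- a₁ ∉ T1, a₂ ∉ T2, a₃ ∉ T3
  have hn1 : a₁ ∉ T1 := by simp only [hT1, Set.mem_setOf_eq, not_le]; linarith
  have hn2 : a₂ ∉ T2 := by simp only [hT2, Set.mem_setOf_eq, not_le]; linarith
  have hn3 : a₃ ∉ T3 := by simp only [hT3, Set.mem_setOf_eq, not_le]; linarith
  -- pairwise disjoint on Icc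
  have hd12 : ∀ a ∈ Set.Icc lo hi, a ∈ T1 → a ∈ T2 → False := by
    intro a _ hx hy
    simp only [hT1, hT2, Set.mem_setOf_eq] at hx hy
    linarith
  have hd13 : ∀ a ∈ Set.Icc lo hi, a ∈ T1 → a ∈ T3 → False := by
    intro a ha hx hy
    simp only [hT1, hT3, Set.mem_setOf_eq] at hx hy
    have := hgpos a (hIm a ha).2
    linarith
  have hd23 : ∀ a ∈ Set.Icc lo hi, a ∈ T2 → a ∈ T3 → False := by
    intro a ha hx hy
    simp only [hT2, hT3, Set.mem_setOf_eq] at hx hy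
    have := hfpos a (hIm a ha).1
    linarith
  rcases (Set.Icc lo hi ∩ T1).eq_empty_or_nonempty with hE1 | hN1
  · -- Icc ⊆ T2 ∪ T3
    have hcov23 : Set.Icc lo hi ⊆ T2 ∪ T3 := by
      intro a ha
      rcases hcover ha with h | h
      · exact absurd (Set.mem_inter ha h) (by rw [hE1]; exact Set.notMem_empty a)
      · exact h
    rcases (Set.Icc lo hi ∩ T2).eq_empty_or_nonempty with hE2 | hN2
    · have : a₃ ∈ T2 ∪ T3 := hcov23 ha₃I
      rcases this with h | h
      · exact absurd (Set.mem_inter ha₃I h) (by rw [hE2]; exact Set.notMem_empty a₃)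
      · exact hn3 h
    · rcases (Set.Icc lo hi ∩ T3).eq_empty_or_nonempty with hE3 | hN3
      · have : a₂ ∈ T2 ∪ T3 := hcov23 ha₂I
        rcases this with h | h
        · exact hn2 h
        · exact absurd (Set.mem_inter ha₂I h) (by rw [hE3]; exact Set.notMem_empty a₂)
      · obtain ⟨x, hxI, hx2, hx3⟩ := isPreconnected_closed_iff.mp hpc T2 T3 hT2c hT3c hcov23 hN2 hN3
        exact hd23 x hxI hx2 hx3
  · rcases (Set.Icc lo hi ∩ (T2 ∪ T3)).eq_empty_or_nonempty with hE23 | hN23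
    · -- Icc ⊆ T1
      have : a₁ ∈ T1 := by
        rcases hcover ha₁I with h | h
        · exact h
        · exact absurd (Set.mem_inter ha₁I h) (by rw [hE23]; exact Set.notMem_empty a₁)
      exact hn1 this
    · obtain ⟨x, hxI, hx1, hx23⟩ := isPreconnected_closed_iff.mp hpc T1 (T2 ∪ T3) hT1c
        (hT2c.union hT3c) hcover hN1 hN23
      rcases hx23 with h | h
      · exact hd12 x hxI hx1 h
      · exact hd13 x hxI hx1 h

noncomputable def goodSet (n : ℕ) (η r₁ r₂ r₃ : ℝ) (x₃ : Euc n) : Set (Euc n) :=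
  {x₁ | ‖x₁‖ ≤ 1 ∧ ‖-(r₂⁻¹ • (r₁ • x₁ + r₃ • x₃))‖ ≤ 1 ∧
    TauAdm η (r₁ * Real.sqrt (1 - ‖x₁‖^2))
      (r₂ * Real.sqrt (1 - ‖-(r₂⁻¹ • (r₁ • x₁ + r₃ • x₃))‖^2))
      (r₃ * Real.sqrt (1 - ‖x₃‖^2))}

lemma goodSet_mono {n : ℕ} {η η' r₁ r₂ r₃ : ℝ} (h : η ≤ η') (x₃ : Euc n) :
    goodSet n η' r₁ r₂ r₃ x₃ ⊆ goodSet n η r₁ r₂ r₃ x₃ := by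
  intro x₁ hx₁
  exact ⟨hx₁.1, hx₁.2.1, tauAdm_mono h hx₁.2.2⟩

lemma coreND {n : ℕ} (hn : 1 ≤ n) {r₁ r₂ r₃ : ℝ} (h1 : 0 < r₁) (h2 : 0 < r₂) (h3 : 0 < r₃)
    (t1 : r₁ < r₂ + r₃) (t2 : r₂ < r₁ + r₃) (t3 : r₃ < r₁ + r₂)
    (x₃ : Euc n) (hx₃ : ‖x₃‖ < 1) :
    ∃ x₁ : Euc n, ‖x₁‖ < 1 ∧ ‖-(r₂⁻¹ • (r₁ • x₁ + r₃ • x₃))‖ < 1 ∧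
      StrictAdm (r₁ * Real.sqrt (1 - ‖x₁‖^2))
        (r₂ * Real.sqrt (1 - ‖-(r₂⁻¹ • (r₁ • x₁ + r₃ • x₃))‖^2))
        (r₃ * Real.sqrt (1 - ‖x₃‖^2)) := by
  set m := ‖x₃‖ with hm
  have hm0 : 0 ≤ m := norm_nonneg _
  obtain ⟨v, hv, hxv⟩ : ∃ v : Euc n, ‖v‖ = 1 ∧ x₃ = m • v := by
    by_cases h : x₃ = 0
    · refine ⟨EuclideanSpace.single (⟨0, hn⟩ : Fin n) (1:ℝ), ?_, ?_⟩
      · rw [EuclideanSpace.norm_single]; norm_num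
      · rw [h, hm, h]; simp
    · refine ⟨‖x₃‖⁻¹ • x₃, ?_, ?_⟩
      · rw [norm_smul, norm_inv, norm_norm, inv_mul_cancel₀ (norm_ne_zero_iff.mpr h)]
      · rw [hm, smul_smul, mul_inv_cancel₀ (norm_ne_zero_iff.mpr h), one_smul]
  obtain ⟨a, haa, haw, hadm⟩ := core1D h1 h2 h3 t1 t2 t3 hm0 hx₃
  refine ⟨a • v, ?_, ?_, ?_⟩
  · rw [norm_smul, hv, Real.norm_eq_abs, mul_one]; exact haa
  · rw [show (-(r₂⁻¹ • (r₁ • (a • v) + r₃ • x₃)) : Euc n)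
        = (-(r₂⁻¹ * (r₁ * a + r₃ * m))) • v by
      rw [hxv, smul_smul, smul_smul, ← add_smul, smul_smul, ← neg_smul]]
    rw [norm_smul, hv, mul_one, Real.norm_eq_abs, abs_neg, abs_mul, abs_inv, abs_of_pos h2]
    rw [inv_mul_eq_div, div_lt_one h2]
    exact haw
  · have hnx₁ : ‖a • v‖ = |a| := by rw [norm_smul, hv, Real.norm_eq_abs, mul_one]
    have hvec : (-(r₂⁻¹ • (r₁ • (a • v) + r₃ • x₃)) : Euc n)
        = (-(r₂⁻¹ * (r₁ * a + r₃ * m))) • v := by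
      rw [hxv, smul_smul, smul_smul, ← add_smul, smul_smul, ← neg_smul]
    have hnx₂ : ‖(-(r₂⁻¹ • (r₁ • (a • v) + r₃ • x₃)) : Euc n)‖ = |r₁*a + r₃*m| / r₂ := by
      rw [hvec, norm_smul, hv, mul_one, Real.norm_eq_abs, abs_neg, abs_mul, abs_inv,
        abs_of_pos h2, inv_mul_eq_div]
    have hs2 : r₂ * Real.sqrt (1 - (|r₁*a + r₃*m| / r₂)^2)
        = Real.sqrt (r₂^2 - (r₁*a+r₃*m)^2) := by
      rw [div_pow, sq_abs]
      rw [show 1 - (r₁*a+r₃*m)^2 / r₂^2 = (r₂^2 - (r₁*a+r₃*m)^2) / r₂^2 by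
        field_simp]
      rw [Real.sqrt_div (by nlinarith [abs_lt.mp haw] : (0:ℝ) ≤ r₂^2 - (r₁*a+r₃*m)^2),
        Real.sqrt_sq h2.le]
      field_simp
    rw [hnx₁, hnx₂, sq_abs, hs2]
    exact hadm

set_option maxHeartbeats 1000000 in
lemma localGood {n : ℕ} (hn : 1 ≤ n) {r₁ r₂ r₃ : ℝ} {x₃ : Euc n}
    (h1 : 0 < r₁) (h2 : 0 < r₂) (h3 : 0 < r₃)
    (t1 : r₁ < r₂ + r₃) (t2 : r₂ < r₁ + r₃) (t3 : r₃ < r₁ + r₂) (hx₃ : ‖x₃‖ < 1) :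
    ∃ (U : Set ((ℝ × ℝ × ℝ) × Euc n)) (η : ℝ), IsOpen U ∧ ((r₁,r₂,r₃), x₃) ∈ U ∧ 0 < η ∧
      ∀ q : (ℝ × ℝ × ℝ) × Euc n, q ∈ U →
        ENNReal.ofReal η ≤ volume (goodSet n η q.1.1 q.1.2.1 q.1.2.2 q.2) := by
  classical
  obtain ⟨x₁₀, hx1, hx2, hadm⟩ := coreND hn h1 h2 h3 t1 t2 t3 x₃ hx₃
  set Z := ((ℝ × ℝ × ℝ) × Euc n) × Euc n
  set p₀ : (ℝ × ℝ × ℝ) × Euc n := ((r₁,r₂,r₃), x₃) with hp₀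
  set z₀ : Z := (p₀, x₁₀) with hz₀
  set X₂ : Z → Euc n := fun z => -(z.1.1.2.1⁻¹ • (z.1.1.1 • z.2 + z.1.1.2.2 • z.1.2)) with hX₂
  set F₁ : Z → ℝ := fun z => z.1.1.1 * Real.sqrt (1 - ‖z.2‖^2) with hF₁
  set F₂ : Z → ℝ := fun z => z.1.1.2.1 * Real.sqrt (1 - ‖X₂ z‖^2) with hF₂
  set F₃ : Z → ℝ := fun z => z.1.1.2.2 * Real.sqrt (1 - ‖z.1.2‖^2) with hF₃
  have c1 : Continuous (fun z : Z => z.1.1.1) := by fun_prop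
  have c2 : Continuous (fun z : Z => z.1.1.2.1) := by fun_prop
  have c3 : Continuous (fun z : Z => z.1.1.2.2) := by fun_prop
  have cx3 : Continuous (fun z : Z => z.1.2) := by fun_prop
  have cx1 : Continuous (fun z : Z => z.2) := continuous_snd
  have hcF₁ : Continuous F₁ := by
    apply c1.mul
    exact Real.continuous_sqrt.comp (continuous_const.sub ((cx1.norm).pow 2))
  have hcF₃ : Continuous F₃ := by
    apply c3.mul
    exact Real.continuous_sqrt.comp (continuous_const.sub ((cx3.norm).pow 2))
  have hr₂ne : (z₀.1.1.2.1 : ℝ) ≠ 0 := h2.ne'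
  have hcX₂ : ContinuousAt X₂ z₀ := by
    apply ContinuousAt.neg
    refine ContinuousAt.smul (f := fun z : Z => z.1.1.2.1⁻¹)
      (g := fun z : Z => z.1.1.1 • z.2 + z.1.1.2.2 • z.1.2) ?_ ?_
    · exact (c2.continuousAt).inv₀ hr₂ne
    · exact ((c1.continuousAt).smul (cx1.continuousAt)).add
        ((c3.continuousAt).smul (cx3.continuousAt))
  have hcF₂ : ContinuousAt F₂ z₀ := by
    apply ContinuousAt.mul c2.continuousAt
    exact (Real.continuous_sqrt.continuousAt).comp
      (continuousAt_const.sub ((hcX₂.norm).pow 2))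
  -- values at z₀
  obtain ⟨he1, he2, he3, hm1, hm2, hm3⟩ := hadm
  have hv1 : F₁ z₀ = r₁ * Real.sqrt (1 - ‖x₁₀‖^2) := rfl
  have hv2 : F₂ z₀ = r₂ * Real.sqrt (1 - ‖-(r₂⁻¹ • (r₁ • x₁₀ + r₃ • x₃))‖^2) := rfl
  have hv3 : F₃ z₀ = r₃ * Real.sqrt (1 - ‖x₃‖^2) := rfl
  set c : ℝ := min (F₂ z₀ + F₃ z₀ - F₁ z₀) (min (F₁ z₀ + F₃ z₀ - F₂ z₀) (F₁ z₀ + F₂ z₀ - F₃ z₀)) / 2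
    with hc
  have hc0 : 0 < c := by
    apply half_pos
    rw [hv1, hv2, hv3]
    exact lt_min (by linarith) (lt_min (by linarith) (by linarith))
  set Mb : ℝ := F₁ z₀ + F₂ z₀ + F₃ z₀ + 1 with hMb
  have hMb0 : 0 < Mb := by
    rw [hMb, hv1, hv2, hv3]; linarith
  have hO : ∀ᶠ z : Z in 𝓝 z₀, ((0 < F₁ z ∧ 0 < F₂ z ∧ 0 < F₃ z) ∧
      (c < F₂ z + F₃ z - F₁ z ∧ c < F₁ z + F₃ z - F₂ z ∧ c < F₁ z + F₂ z - F₃ z)) ∧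
      ((F₁ z < Mb ∧ F₂ z < Mb ∧ F₃ z < Mb) ∧
       (0 < z.1.1.1 ∧ 0 < z.1.1.2.1 ∧ 0 < z.1.1.2.2)) := by
    have e1 : 0 < F₁ z₀ := by rw [hv1]; exact he1
    have e2 : 0 < F₂ z₀ := by rw [hv2]; exact he2
    have e3 : 0 < F₃ z₀ := by rw [hv3]; exact he3
    have hml1 : min (F₂ z₀ + F₃ z₀ - F₁ z₀)
        (min (F₁ z₀ + F₃ z₀ - F₂ z₀) (F₁ z₀ + F₂ z₀ - F₃ z₀)) ≤ F₂ z₀ + F₃ z₀ - F₁ z₀ :=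
      min_le_left _ _
    have hml2 : min (F₂ z₀ + F₃ z₀ - F₁ z₀)
        (min (F₁ z₀ + F₃ z₀ - F₂ z₀) (F₁ z₀ + F₂ z₀ - F₃ z₀)) ≤ F₁ z₀ + F₃ z₀ - F₂ z₀ :=
      (min_le_right _ _).trans (min_le_left _ _)
    have hml3 : min (F₂ z₀ + F₃ z₀ - F₁ z₀)
        (min (F₁ z₀ + F₃ z₀ - F₂ z₀) (F₁ z₀ + F₂ z₀ - F₃ z₀)) ≤ F₁ z₀ + F₂ z₀ - F₃ z₀ :=
      (min_le_right _ _).trans (min_le_right _ _)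
    have hceq : 2*c = min (F₂ z₀ + F₃ z₀ - F₁ z₀)
        (min (F₁ z₀ + F₃ z₀ - F₂ z₀) (F₁ z₀ + F₂ z₀ - F₃ z₀)) := by rw [hc]; ring
    have g1 : c < F₂ z₀ + F₃ z₀ - F₁ z₀ := by linarith
    have g2 : c < F₁ z₀ + F₃ z₀ - F₂ z₀ := by linarith
    have g3 : c < F₁ z₀ + F₂ z₀ - F₃ z₀ := by linarith
    have b1 : F₁ z₀ < Mb := by rw [hMb]; linarith
    have b2 : F₂ z₀ < Mb := by rw [hMb]; linarith
    have b3 : F₃ z₀ < Mb := by rw [hMb]; linarith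
    refine Filter.Eventually.and (Filter.Eventually.and ?_ ?_) (Filter.Eventually.and ?_ ?_)
    · exact Filter.Eventually.and (hcF₁.continuousAt.eventually_const_lt e1)
        (Filter.Eventually.and (hcF₂.eventually_const_lt e2)
          (hcF₃.continuousAt.eventually_const_lt e3))
    · refine Filter.Eventually.and ?_ (Filter.Eventually.and ?_ ?_)
      · exact (((hcF₂.add hcF₃.continuousAt).sub hcF₁.continuousAt).eventually_const_lt g1)
      · exact (((hcF₁.continuousAt.add hcF₃.continuousAt).sub hcF₂).eventually_const_lt g2)
      · exact (((hcF₁.continuousAt.add hcF₂).sub hcF₃.continuousAt).eventually_const_lt g3)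
    · exact Filter.Eventually.and (hcF₁.continuousAt.eventually_lt_const b1)
        (Filter.Eventually.and (hcF₂.eventually_lt_const b2)
          (hcF₃.continuousAt.eventually_lt_const b3))
    · exact Filter.Eventually.and (c1.continuousAt.eventually_const_lt h1)
        (Filter.Eventually.and (c2.continuousAt.eventually_const_lt h2)
          (c3.continuousAt.eventually_const_lt h3))
  rw [hz₀, nhds_prod_eq] at hO
  obtain ⟨t, ht, u, hu, htu⟩ := Filter.mem_prod_iff.mp hO
  obtain ⟨U, hUsub, hUopen, hpU⟩ := _root_.mem_nhds_iff.mp ht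
  obtain ⟨ρ, hρ0, hball⟩ := Metric.mem_nhds_iff.mp hu
  have hvolpos : 0 < (volume (ball x₁₀ ρ)).toReal :=
    ENNReal.toReal_pos (measure_ball_pos volume x₁₀ hρ0).ne' measure_ball_lt_top.ne
  set η : ℝ := min (c / Mb) (min ((volume (ball x₁₀ ρ)).toReal) 1) with hη
  have hη0 : 0 < η := lt_min (div_pos hc0 hMb0) (lt_min hvolpos one_pos)
  refine ⟨U, η, hUopen, hpU, hη0, ?_⟩
  intro q hq
  have hsub2 : ball x₁₀ ρ ⊆ goodSet n η q.1.1 q.1.2.1 q.1.2.2 q.2 := by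
    intro y hy
    have hzmem : (q, y) ∈ t ×ˢ u := Set.mk_mem_prod (hUsub hq) (hball hy)
    have hP := htu hzmem
    obtain ⟨⟨⟨p1, p2, p3⟩, ⟨mm1, mm2, mm3⟩⟩, ⟨⟨b1, b2, b3⟩, ⟨hr1, hr2, hr3⟩⟩⟩ := hP
    have hFy1 : F₁ (q, y) = q.1.1 * Real.sqrt (1 - ‖y‖^2) := rfl
    have hFy2 : F₂ (q, y)
        = q.1.2.1 * Real.sqrt (1 - ‖-(q.1.2.1⁻¹ • (q.1.1 • y + q.1.2.2 • q.2))‖^2) := rfl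
    have hFy3 : F₃ (q, y) = q.1.2.2 * Real.sqrt (1 - ‖q.2‖^2) := rfl
    have hyn : ‖y‖ ≤ 1 := by
      by_contra hcon
      push_neg at hcon
      have : Real.sqrt (1 - ‖y‖^2) = 0 :=
        Real.sqrt_eq_zero'.mpr (by nlinarith [norm_nonneg y])
      rw [hFy1, this, mul_zero] at p1
      exact lt_irrefl 0 p1
    have hyn2 : ‖-(q.1.2.1⁻¹ • (q.1.1 • y + q.1.2.2 • q.2))‖ ≤ 1 := by
      by_contra hcon
      push_neg at hcon
      have : Real.sqrt (1 - ‖-(q.1.2.1⁻¹ • (q.1.1 • y + q.1.2.2 • q.2))‖^2) = 0 :=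
        Real.sqrt_eq_zero'.mpr (by nlinarith [norm_nonneg (-(q.1.2.1⁻¹ • (q.1.1 • y + q.1.2.2 • q.2)))])
      rw [hFy2, this, mul_zero] at p2
      exact lt_irrefl 0 p2
    refine ⟨hyn, hyn2, ?_⟩
    have hmaxle : max (F₁ (q,y)) (max (F₂ (q,y)) (F₃ (q,y))) ≤ Mb :=
      max_le b1.le (max_le b2.le b3.le)
    have hmax0 : 0 ≤ max (F₁ (q,y)) (max (F₂ (q,y)) (F₃ (q,y))) :=
      le_trans p1.le (le_max_left _ _)
    have hηle : η ≤ c / Mb := min_le_left _ _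
    have hηmax : η * max (F₁ (q,y)) (max (F₂ (q,y)) (F₃ (q,y))) ≤ c := by
      calc η * max (F₁ (q,y)) (max (F₂ (q,y)) (F₃ (q,y)))
          ≤ (c / Mb) * Mb :=
            mul_le_mul hηle hmaxle hmax0 (le_of_lt (div_pos hc0 hMb0))
        _ = c := div_mul_cancel₀ c hMb0.ne'
    exact ⟨p1, p2, p3, by linarith [mm3], by linarith [mm1], by linarith [mm2]⟩
  calc ENNReal.ofReal η ≤ ENNReal.ofReal ((volume (ball x₁₀ ρ)).toReal) :=
        ENNReal.ofReal_le_ofReal (le_trans (min_le_right _ _) (min_le_left _ _))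
    _ = volume (ball x₁₀ ρ) := ENNReal.ofReal_toReal measure_ball_lt_top.ne
    _ ≤ volume (goodSet n η q.1.1 q.1.2.1 q.1.2.2 q.2) := measure_mono hsub2

set_option maxHeartbeats 1000000 in
lemma uniformLemma (n : ℕ) (hn : 1 ≤ n) (τ δ : ℝ) (hτ : 0 < τ) (hδ0 : 0 < δ) (hδ1 : δ < 1) :
    ∃ η : ℝ, 0 < η ∧ ∀ r₁ r₂ r₃ : ℝ, τ ≤ r₁ → r₁ ≤ 1 → τ ≤ r₂ → r₂ ≤ 1 → τ ≤ r₃ → r₃ ≤ 1 →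
      r₃ + τ ≤ r₁ + r₂ → r₁ + τ ≤ r₂ + r₃ → r₂ + τ ≤ r₁ + r₃ →
      ∀ x₃ : Euc n, ‖x₃‖ ≤ 1 - δ →
        ENNReal.ofReal η ≤ volume (goodSet n η r₁ r₂ r₃ x₃) := by
  classical
  set P : Set ((ℝ × ℝ × ℝ) × Euc n) :=
    ((Set.Icc τ 1 ×ˢ Set.Icc τ 1 ×ˢ Set.Icc τ 1) ∩
      {r : ℝ × ℝ × ℝ | r.2.2 + τ ≤ r.1 + r.2.1 ∧ r.1 + τ ≤ r.2.1 + r.2.2 ∧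
        r.2.1 + τ ≤ r.1 + r.2.2}) ×ˢ closedBall (0 : Euc n) (1 - δ) with hP
  have hPc : IsCompact P := by
    apply IsCompact.prod
    · apply IsCompact.inter_right (isCompact_Icc.prod (isCompact_Icc.prod isCompact_Icc))
      have e : {r : ℝ × ℝ × ℝ | r.2.2 + τ ≤ r.1 + r.2.1 ∧ r.1 + τ ≤ r.2.1 + r.2.2 ∧
          r.2.1 + τ ≤ r.1 + r.2.2}
          = {r : ℝ × ℝ × ℝ | r.2.2 + τ ≤ r.1 + r.2.1} ∩
            ({r : ℝ × ℝ × ℝ | r.1 + τ ≤ r.2.1 + r.2.2} ∩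
             {r : ℝ × ℝ × ℝ | r.2.1 + τ ≤ r.1 + r.2.2}) := rfl
      rw [e]
      exact (isClosed_le (by fun_prop) (by fun_prop)).inter
        ((isClosed_le (by fun_prop) (by fun_prop)).inter
          (isClosed_le (by fun_prop) (by fun_prop)))
    · exact isCompact_closedBall _ _
  have hloc : ∀ p ∈ P, ∃ (U : Set ((ℝ × ℝ × ℝ) × Euc n)) (ηp : ℝ),
      IsOpen U ∧ p ∈ U ∧ 0 < ηp ∧ ∀ q : (ℝ × ℝ × ℝ) × Euc n, q ∈ U →
        ENNReal.ofReal ηp ≤ volume (goodSet n ηp q.1.1 q.1.2.1 q.1.2.2 q.2) := by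
    rintro ⟨⟨rr₁, rr₂, rr₃⟩, x₃⟩ hp
    obtain ⟨⟨hbox, hineq⟩, hx⟩ := hp
    obtain ⟨hb1, hb2, hb3⟩ := hbox
    obtain ⟨hi1, hi2, hi3⟩ := hineq
    simp only [Set.mem_Icc] at hb1 hb2 hb3
    have hx' : ‖x₃‖ ≤ 1 - δ := by
      rwa [mem_closedBall_zero_iff] at hx
    exact localGood hn (lt_of_lt_of_le hτ hb1.1) (lt_of_lt_of_le hτ hb2.1)
      (lt_of_lt_of_le hτ hb3.1) (by simp only at hi2 ⊢; linarith)
      (by simp only at hi3 ⊢; linarith) (by simp only at hi1 ⊢; linarith)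
      (by linarith)
  choose! U ηp hUo hpU hηp hgood using hloc
  have hcov : P ⊆ ⋃ i : ↥P, U i.1 := by
    intro x hx
    exact Set.mem_iUnion.mpr ⟨⟨x, hx⟩, hpU x hx⟩
  obtain ⟨t, ht⟩ := hPc.elim_finite_subcover (fun i : ↥P => U i.1)
    (fun i => hUo i.1 i.2) hcov
  set η : ℝ := if h : t.Nonempty then t.inf' h (fun i => ηp i.1) else 1 with hηdef
  have hη0 : 0 < η := by
    rw [hηdef]
    split_ifs with h
    · exact (Finset.lt_inf'_iff h).mpr (fun i hi => hηp i.1 i.2)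
    · norm_num
  refine ⟨η, hη0, ?_⟩
  intro r₁ r₂ r₃ ha1 ha2 ha3 ha4 ha5 ha6 ha7 ha8 ha9 x₃ hx₃
  have hpP : ((r₁, r₂, r₃), x₃) ∈ P := by
    refine ⟨⟨⟨Set.mem_Icc.mpr ⟨ha1, ha2⟩, Set.mem_Icc.mpr ⟨ha3, ha4⟩,
      Set.mem_Icc.mpr ⟨ha5, ha6⟩⟩, ⟨ha7, ha8, ha9⟩⟩, ?_⟩
    rwa [mem_closedBall_zero_iff]
  obtain ⟨i, hi⟩ := Set.mem_iUnion.mp (ht hpP)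
  simp only [Set.mem_iUnion, exists_prop] at hi
  obtain ⟨hit, hiU⟩ := hi
  have hne : t.Nonempty := ⟨i, hit⟩
  have hle : η ≤ ηp i.1 := by
    rw [hηdef, dif_pos hne]
    exact Finset.inf'_le _ hit
  calc ENNReal.ofReal η ≤ ENNReal.ofReal (ηp i.1) := ENNReal.ofReal_le_ofReal hle
    _ ≤ volume (goodSet n (ηp i.1) r₁ r₂ r₃ x₃) := hgood i.1 i.2 ((r₁,r₂,r₃),x₃) hiU
    _ ≤ volume (goodSet n η r₁ r₂ r₃ x₃) := measure_mono (goodSet_mono hle x₃)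

end
set_option maxHeartbeats 2000000 in
/-- Lemma 3.2. -/
theorem paininneck (d k : ℕ) (hd : 2 ≤ d) (hk : 1 ≤ k) (hk' : k ≤ d - 1)
    (τ ε : ℝ) (hτ : 0 < τ) (hε : 0 < ε) :
    ∃ η : ℝ, 0 < η ∧
      ∀ r₁ r₂ r₃ : ℝ, TauAdm τ r₁ r₂ r₃ →
        ∃ G B : Set (Euc (d-k)), MeasurableSet G ∧ MeasurableSet B ∧
          Disjoint G B ∧ G ∪ B = Metric.closedBall 0 1 ∧
          volume B < ENNReal.ofReal ε ∧
          ∀ x₃ ∈ G, ENNReal.ofReal η ≤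
            volume {x₁ : Euc (d-k) | ‖x₁‖ ≤ 1 ∧ ‖-(r₂⁻¹ • (r₁ • x₁ + r₃ • x₃))‖ ≤ 1 ∧
              TauAdm η (r₁ * Real.sqrt (1 - ‖x₁‖^2))
                (r₂ * Real.sqrt (1 - ‖-(r₂⁻¹ • (r₁ • x₁ + r₃ • x₃))‖^2))
                (r₃ * Real.sqrt (1 - ‖x₃‖^2))} := by
  have hn : 1 ≤ d - k := by omega
  set n := d - k with hndef
  set v : ℝ := (volume (closedBall (0 : Euc n) 1)).toReal with hv
  have hvnn : (0:ℝ) ≤ v := ENNReal.toReal_nonneg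
  have hden : (0:ℝ) < 2*(v*n+1) := by nlinarith [mul_nonneg hvnn (Nat.cast_nonneg (α := ℝ) n)]
  set δ : ℝ := min (1/2 : ℝ) (ε / (2*(v*n+1))) with hδ
  have hδ0 : 0 < δ := lt_min (by norm_num) (div_pos hε hden)
  have hδhalf : δ ≤ 1/2 := min_le_left _ _
  have hδε : δ ≤ ε / (2*(v*n+1)) := min_le_right _ _
  obtain ⟨η, hη0, hmain⟩ := uniformLemma n hn τ δ hτ hδ0 (by linarith)
  refine ⟨η, hη0, ?_⟩
  intro r₁ r₂ r₃ hr
  obtain ⟨h1, h2, h3, h4, h5, h6⟩ := hr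
  set M := max r₁ (max r₂ r₃) with hM
  have hM0 : 0 < M := lt_of_lt_of_le h1 (le_max_left _ _)
  have hMr1 : r₁ ≤ M := le_max_left _ _
  have hMr2 : r₂ ≤ M := le_trans (le_max_left _ _) (le_max_right _ _)
  have hMr3 : r₃ ≤ M := le_trans (le_max_right _ _) (le_max_right _ _)
  have hτM1 : τ * M ≤ r₁ := by linarith
  have hτM2 : τ * M ≤ r₂ := by linarith
  have hτM3 : τ * M ≤ r₃ := by linarith
  refine ⟨closedBall 0 (1-δ), closedBall 0 1 \ closedBall 0 (1-δ),
    measurableSet_closedBall, measurableSet_closedBall.diff measurableSet_closedBall,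
    disjoint_sdiff_self_right, Set.union_diff_cancel
      (closedBall_subset_closedBall (by linarith)), ?_, ?_⟩
  · -- volume bound
    have hsub : closedBall (0 : Euc n) (1-δ) ⊆ closedBall 0 1 :=
      closedBall_subset_closedBall (by linarith)
    have hfin : volume (closedBall (0 : Euc n) 1) ≠ ⊤ :=
      (isCompact_closedBall _ _).measure_lt_top.ne
    have hfin2 : volume (closedBall (0 : Euc n) (1-δ)) ≠ ⊤ :=
      (isCompact_closedBall _ _).measure_lt_top.ne
    rw [measure_diff hsub measurableSet_closedBall.nullMeasurableSet hfin2]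
    have hdiffne : volume (closedBall (0:Euc n) 1) - volume (closedBall (0:Euc n) (1-δ)) ≠ ⊤ := by
      exact (tsub_le_self.trans_lt (lt_top_iff_ne_top.mpr hfin)).ne
    rw [ENNReal.lt_ofReal_iff_toReal_lt hdiffne]
    rw [ENNReal.toReal_sub_of_le (measure_mono hsub) hfin]
    have hball : volume (closedBall (0:Euc n) (1-δ))
        = ENNReal.ofReal ((1-δ) ^ n) * volume (closedBall (0:Euc n) 1) := by
      rw [Measure.addHaar_closedBall' volume (0:Euc n) (by linarith : (0:ℝ) ≤ 1-δ)]
      congr 2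
      · rw [finrank_euclideanSpace_fin]
    have htr : (volume (closedBall (0:Euc n) (1-δ))).toReal = (1-δ)^n * v := by
      rw [hball, ENNReal.toReal_mul, ENNReal.toReal_ofReal (pow_nonneg (by linarith : (0:ℝ) ≤ 1-δ) n)]
    rw [htr]
    have hbern : 1 - (n:ℝ)*δ ≤ (1-δ)^n := by
      have := one_add_mul_le_pow (show (-2:ℝ) ≤ -δ by linarith) n
      calc 1 - (n:ℝ)*δ = 1 + (n:ℝ)*(-δ) := by ring
        _ ≤ (1 + -δ)^n := this
        _ = (1-δ)^n := by ring_nf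
    have h2v : (1:ℝ) ≤ 2*(v*n+1) := by nlinarith [hvnn, Nat.cast_nonneg (α := ℝ) n]
    have hδb : δ * (2*(v*n+1)) ≤ ε := by
      rw [← le_div_iff₀ hden]
      exact hδε
    nlinarith [mul_le_mul_of_nonneg_left hbern hvnn, mul_nonneg (mul_nonneg hvnn (Nat.cast_nonneg (α := ℝ) n)) hδ0.le]
  · intro x₃ hx₃G
    have hx₃ : ‖x₃‖ ≤ 1 - δ := by rwa [mem_closedBall_zero_iff] at hx₃G
    have key := hmain (r₁/M) (r₂/M) (r₃/M)
      ((le_div_iff₀ hM0).mpr (by linarith)) ((div_le_one hM0).mpr hMr1)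
      ((le_div_iff₀ hM0).mpr (by linarith)) ((div_le_one hM0).mpr hMr2)
      ((le_div_iff₀ hM0).mpr (by linarith)) ((div_le_one hM0).mpr hMr3)
      ?_ ?_ ?_ x₃ hx₃
    rotate_left
    · rw [← add_div, div_add' _ _ _ hM0.ne', div_le_div_iff_of_pos_right hM0]
      linarith
    · rw [← add_div, div_add' _ _ _ hM0.ne', div_le_div_iff_of_pos_right hM0]
      linarith
    · rw [← add_div, div_add' _ _ _ hM0.ne', div_le_div_iff_of_pos_right hM0]
      linarith
    have hseteq : goodSet n η (r₁/M) (r₂/M) (r₃/M) x₃ = goodSet n η r₁ r₂ r₃ x₃ := by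
      have hvec : ∀ x₁ : Euc n, -((r₂/M)⁻¹ • ((r₁/M) • x₁ + (r₃/M) • x₃))
          = -(r₂⁻¹ • (r₁ • x₁ + r₃ • x₃)) := by
        intro x₁
        rw [smul_add, smul_add, smul_smul, smul_smul, smul_smul, smul_smul]
        rw [show (r₂/M)⁻¹ * (r₁/M) = r₂⁻¹ * r₁ by
          rw [inv_div]; field_simp]
        rw [show (r₂/M)⁻¹ * (r₃/M) = r₂⁻¹ * r₃ by
          rw [inv_div]; field_simp]
      ext x₁
      simp only [goodSet, Set.mem_setOf_eq, hvec x₁]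
      refine and_congr Iff.rfl (and_congr Iff.rfl ?_)
      rw [show r₁/M * Real.sqrt (1 - ‖x₁‖^2) = M⁻¹ * (r₁ * Real.sqrt (1 - ‖x₁‖^2)) by ring,
        show r₂/M * Real.sqrt (1 - ‖-(r₂⁻¹ • (r₁ • x₁ + r₃ • x₃))‖^2)
          = M⁻¹ * (r₂ * Real.sqrt (1 - ‖-(r₂⁻¹ • (r₁ • x₁ + r₃ • x₃))‖^2)) by ring,
        show r₃/M * Real.sqrt (1 - ‖x₃‖^2) = M⁻¹ * (r₃ * Real.sqrt (1 - ‖x₃‖^2)) by ring]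
      exact tauAdm_scale (inv_pos.mpr hM0)
    rw [hseteq] at key
    exact key
end

section
/- Let d ≥ 2. Let φ : ℕ → (0,∞) satisfy φ(K) → 0 as K → ∞, and let (ϱ_ν)_{ν∈ℕ} be positive reals with ϱ_ν → 0. Let (E^ν)_{ν∈ℕ} be a sequence of measurable subsets of ℝ^d satisfying E^ν = (E^ν)^{†★} and |E^ν| = |𝔹_d| for all ν, and suppose that for every ν and every K ∈ ℕ one has Σ_{k ∈ ℤ, |k| > K} |E^ν_k| ≤ φ(K) + ϱ_ν, where E^ν_k = {(x',t) ∈ E^ν : 2^{k−1} ≤ h_ν(x') < 2^k} and h_ν(x') = |(E^ν)^{x'}|. Then the family {E^ν : ν ∈ ℕ} is precompact: every subsequence has a further subsequence (E^{ν_m}) and a measurable set E ⊆ ℝ^d with |E^{ν_m} Δ E| → 0. -/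
open MeasureTheory Metric Filter
open scoped ENNReal Pointwise Topology

/-- The dyadic layers of Lemma 5.6 (with the convention `2^{k-1} ≤ h < 2^k`). -/
noncomputable def layer' (d : ℕ) (E : Set (Euc d)) (k : ℤ) : Set (Euc d) :=
  {x ∈ E | ENNReal.ofReal ((2:ℝ) ^ (k-1)) ≤ volume (sliceV d E (projHead d x)) ∧
    volume (sliceV d E (projHead d x)) < ENNReal.ofReal ((2:ℝ) ^ k)}


section AuxSP
noncomputable section
variable {n : ℕ}
lemma projHead_join (x' : Euc (n+1)) (t : ℝ) : projHead (n+2) (join (n+2) x' t) = x' := by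
  ext i
  show (join (n+2) x' t) ⟨i, _⟩ = x' i
  simp only [_root_.join]
  rw [dif_pos (by exact i.isLt)]
lemma lastC_join (x' : Euc (n+1)) (t : ℝ) : lastC (n+2) (join (n+2) x' t) = t := by
  show (join (n+2) x' t) ⟨n+1, _⟩ = t
  simp only [_root_.join]
  rw [dif_neg (by omega)]
lemma join_eta (x : Euc (n+2)) : join (n+2) (projHead (n+2) x) (lastC (n+2) x) = x := by
  ext i
  show dite _ _ _ = x i
  by_cases h : (i:ℕ) < n+2-1
  · rw [dif_pos h]
    rfl
  · rw [dif_neg h]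
    simp only [lastC]
    rw [dif_pos (by omega)]
    have hi : i = ⟨n+2-1, by omega⟩ := Fin.ext (by show (i:ℕ) = n+2-1; omega)
    rw [hi]
lemma join_injective {x' y' : Euc (n+1)} {t s : ℝ} (h : join (n+2) x' t = join (n+2) y' s) :
    x' = y' ∧ t = s :=
  ⟨by rw [← projHead_join x' t, h, projHead_join], by rw [← lastC_join x' t, h, lastC_join]⟩

-- structural function
def mSlice (n : ℕ) (E : Set (Euc (n+2))) (t : ℝ) : ℝ≥0∞ := volume (sliceH (n+2) E t)
noncomputable def gFun (n : ℕ) (E : Set (Euc (n+2))) (a : ℝ≥0∞) : ℝ≥0∞ :=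
  volume {t : ℝ | 0 < mSlice n E t ∧ a ≤ mSlice n E t}
noncomputable def omg (n : ℕ) : ℝ := (volume (Metric.closedBall (0 : Euc (n+1)) 1)).toReal
noncomputable def wFun (n : ℕ) (E : Set (Euc (n+2))) (r : ℝ) : ℝ≥0∞ :=
  gFun n E (ENNReal.ofReal (omg n * |r| ^ (n+1)))

lemma gFun_antitone {E : Set (Euc (n+2))} : Antitone (gFun n E) := by
  intro a b hab
  refine measure_mono ?_
  intro t ht
  exact ⟨ht.1, le_trans hab ht.2⟩

lemma omg_nonneg : 0 ≤ omg n := ENNReal.toReal_nonneg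

lemma wFun_anti {E : Set (Euc (n+2))} {r r' : ℝ} (h : |r| ≤ |r'|) :
    wFun n E r' ≤ wFun n E r := by
  refine gFun_antitone (ENNReal.ofReal_le_ofReal ?_)
  exact mul_le_mul_of_nonneg_left (pow_le_pow_left₀ (abs_nonneg r) h _) omg_nonneg

lemma sliceV_schwarz (E : Set (Euc (n+2))) (x' : Euc (n+1)) :
    sliceV (n+2) (schwarz (n+2) E) x'
      = {t | 0 < mSlice n E t ∧ ENNReal.ofReal (omg n * ‖x'‖ ^ (n+1)) ≤ mSlice n E t} := by
  ext t
  constructor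
  · rintro ⟨y', s, hjoin, h1, h2⟩
    obtain ⟨rfl, rfl⟩ := join_injective hjoin
    exact ⟨h1, h2⟩
  · intro h
    exact ⟨x', t, rfl, h.1, h.2⟩

lemma vol_sliceV_schwarz (E : Set (Euc (n+2))) (x' : Euc (n+1)) :
    volume (sliceV (n+2) (schwarz (n+2) E) x') = wFun n E ‖x'‖ := by
  rw [sliceV_schwarz]
  unfold wFun
  rw [abs_norm]
  rfl

lemma vol_interval (c : ℝ≥0∞) :
    volume {t : ℝ | 0 < c ∧ ENNReal.ofReal (2 * |t|) ≤ c} = c := by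
  rcases eq_or_ne c 0 with rfl | hc0
  · simp
  rcases eq_or_ne c ⊤ with rfl | hctop
  · have : {t : ℝ | 0 < (⊤:ℝ≥0∞) ∧ ENNReal.ofReal (2 * |t|) ≤ (⊤:ℝ≥0∞)} = Set.univ := by
      ext t; simp
    rw [this, Real.volume_univ]
  · have : {t : ℝ | 0 < c ∧ ENNReal.ofReal (2 * |t|) ≤ c}
        = Set.Icc (-(c.toReal/2)) (c.toReal/2) := by
      ext t
      simp only [Set.mem_setOf_eq, Set.mem_Icc]
      constructor
      · rintro ⟨-, h2⟩
        rw [ENNReal.ofReal_le_iff_le_toReal hctop] at h2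
        exact abs_le.mp (by linarith)
      · intro ht
        have h2 : |t| ≤ c.toReal / 2 := abs_le.mpr ht
        exact ⟨hc0.bot_lt, (ENNReal.ofReal_le_iff_le_toReal hctop).mpr (by linarith)⟩
    rw [this, Real.volume_Icc]
    rw [show c.toReal / 2 - -(c.toReal / 2) = c.toReal by ring, ENNReal.ofReal_toReal hctop]

lemma mem_iff_struct {E : Set (Euc (n+2))} (hE : E = dagStar (n+2) E) (x : Euc (n+2)) :
    x ∈ E ↔ 0 < wFun n E ‖projHead (n+2) x‖ ∧
      ENNReal.ofReal (2 * |lastC (n+2) x|) ≤ wFun n E ‖projHead (n+2) x‖ := by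
  conv_lhs => rw [hE]
  show x ∈ steiner (n+2) (schwarz (n+2) E) ↔ _
  constructor
  · rintro ⟨x', t, rfl, h1, h2⟩
    rw [vol_sliceV_schwarz] at h1 h2
    rw [projHead_join, lastC_join]
    exact ⟨h1, h2⟩
  · intro h
    refine ⟨projHead (n+2) x, lastC (n+2) x, (join_eta x).symm, ?_, ?_⟩
    · rw [vol_sliceV_schwarz]; exact h.1
    · rw [vol_sliceV_schwarz]; exact h.2

lemma vol_sliceV {E : Set (Euc (n+2))} (hE : E = dagStar (n+2) E) (x' : Euc (n+1)) :
    volume (sliceV (n+2) E x') = wFun n E ‖x'‖ := by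
  have hset : sliceV (n+2) E x'
      = {t | 0 < wFun n E ‖x'‖ ∧ ENNReal.ofReal (2 * |t|) ≤ wFun n E ‖x'‖} := by
    ext t
    show join (n+2) x' t ∈ E ↔ _
    rw [mem_iff_struct hE, projHead_join, lastC_join]
    rfl
  rw [hset, vol_interval]

def psi (n : ℕ) : Euc (n+2) ≃ᵐ (Euc (n+1)) × ℝ :=
  ((MeasurableEquiv.toLp 2 (Fin (n+2) → ℝ)).symm.trans
    ((MeasurableEquiv.piFinSuccAbove (fun _ : Fin (n+2) => ℝ) (Fin.last (n+1))).trans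
      ((MeasurableEquiv.refl ℝ).prodCongr (MeasurableEquiv.toLp 2 (Fin (n+1) → ℝ))))).trans
    MeasurableEquiv.prodComm

lemma psi_measurePreserving (n : ℕ) : MeasurePreserving (psi n) volume volume := by
  have h1 := EuclideanSpace.volume_preserving_symm_measurableEquiv_toLp (Fin (n+2))
  have h2 := volume_preserving_piFinSuccAbove (fun _ : Fin (n+2) => ℝ) (Fin.last (n+1))
  have h3 := (EuclideanSpace.volume_preserving_symm_measurableEquiv_toLp (Fin (n+1))).symm
    (MeasurableEquiv.toLp 2 (Fin (n+1) → ℝ)).symm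
  have h4 : MeasurePreserving
      ((MeasurableEquiv.refl ℝ).prodCongr (MeasurableEquiv.toLp 2 (Fin (n+1) → ℝ)))
      volume volume := by
    have := (MeasurePreserving.id (volume : Measure ℝ)).prod h3
    rw [← Measure.volume_eq_prod, ← Measure.volume_eq_prod] at this
    exact this
  have h5 : MeasurePreserving (MeasurableEquiv.prodComm : ℝ × Euc (n+1) ≃ᵐ Euc (n+1) × ℝ)
      volume volume := by
    have := Measure.measurePreserving_swap (μ := (volume : Measure ℝ))
      (ν := (volume : Measure (Euc (n+1))))
    rw [← Measure.volume_eq_prod, ← Measure.volume_eq_prod] at this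
    exact this
  exact ((h1.trans h2).trans h4).trans h5

lemma psi_apply (x : Euc (n+2)) : psi n x = (projHead (n+2) x, lastC (n+2) x) := by
  ext1
  · show (MeasurableEquiv.toLp 2 (Fin (n+1) → ℝ))
      (Fin.removeNth (Fin.last (n+1)) x.ofLp) = projHead (n+2) x
    ext i
    show x ((Fin.last (n+1)).succAbove i) = x ⟨i, _⟩
    exact congrArg x.ofLp (Fin.ext (by simp [Fin.succAbove_last]))
  · show x.ofLp (Fin.last (n+1)) = lastC (n+2) x
    simp only [lastC]
    rw [dif_pos (by omega)]
    rfl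


lemma vol_pre (S : Set (Euc (n+1) × ℝ)) (hS : NullMeasurableSet S volume) :
    volume ((psi n) ⁻¹' S) = volume S :=
  (psi_measurePreserving n).measure_preimage hS

lemma ofReal_two_zpow (m : ℤ) : ENNReal.ofReal ((2:ℝ)^m) = (2:ℝ≥0∞)^m := by
  rw [← Real.rpow_intCast 2 m, ← ENNReal.ofReal_rpow_of_pos two_pos,
    show ENNReal.ofReal 2 = 2 by norm_num, ENNReal.rpow_intCast]

variable {E : Set (Euc (n+2))}

lemma prod_subset_of_wFun (hE : E = dagStar (n+2) E) {r u : ℝ} (hu : 0 < u)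
    (hw : ENNReal.ofReal (2*u) ≤ wFun n E r) :
    (psi n) ⁻¹' ((closedBall (0:Euc (n+1)) |r|) ×ˢ (Set.Icc (-u) u)) ⊆ E := by
  intro x hx
  rw [Set.mem_preimage, psi_apply] at hx
  obtain ⟨hx1, hx2⟩ := hx
  rw [mem_iff_struct hE]
  have hle : wFun n E r ≤ wFun n E ‖projHead (n+2) x‖ := by
    apply wFun_anti
    rw [abs_norm]
    rwa [mem_closedBall, dist_zero_right] at hx1
  have h2u : (0:ℝ≥0∞) < ENNReal.ofReal (2*u) := ENNReal.ofReal_pos.mpr (by linarith)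
  refine ⟨lt_of_lt_of_le h2u (hw.trans hle), ?_⟩
  refine le_trans (ENNReal.ofReal_le_ofReal ?_) (hw.trans hle)
  rw [Set.mem_Icc] at hx2
  have : |lastC (n+2) x| ≤ u := abs_le.mpr hx2
  linarith

lemma vol_ball_prod_Icc (r u : ℝ) (hr : 0 ≤ r) :
    volume ((closedBall (0:Euc (n+1)) r) ×ˢ (Set.Icc (-u) u))
      = ENNReal.ofReal (r^(n+1)) * volume (closedBall (0:Euc (n+1)) 1) * ENNReal.ofReal (2*u) := by
  rw [Measure.volume_eq_prod, Measure.prod_prod, Measure.addHaar_closedBall' _ _ hr,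
    Real.volume_Icc, finrank_euclideanSpace_fin]
  congr 1
  rw [show u - -u = 2*u by ring]

lemma wFun_large_bound (hE : E = dagStar (n+2) E)
    (hvol : volume E = volume (closedBall (0:Euc (n+2)) 1)) {r u : ℝ}
    (hu : 0 < u) (hw : ENNReal.ofReal (2*u) ≤ wFun n E r) :
    ENNReal.ofReal (|r|^(n+1)) * volume (closedBall (0:Euc (n+1)) 1) * ENNReal.ofReal (2*u)
      ≤ volume (closedBall (0:Euc (n+2)) 1) := by
  rw [← hvol]
  rw [← vol_ball_prod_Icc |r| u (abs_nonneg r)]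
  rw [← vol_pre _ ((measurableSet_closedBall.prod measurableSet_Icc).nullMeasurableSet)]
  exact measure_mono (prod_subset_of_wFun hE hu hw)

lemma wFun_infty_null (hE : E = dagStar (n+2) E)
    (hvol : volume E = volume (closedBall (0:Euc (n+2)) 1)) :
    volume {x : Euc (n+2) | wFun n E ‖projHead (n+2) x‖ = ⊤} = 0 := by
  haveI : Nontrivial (Euc (n+1)) := by
    apply Module.nontrivial_of_finrank_pos (R := ℝ)
    rw [finrank_euclideanSpace_fin]
    omega
  by_cases hcase : ∃ r : ℝ, 0 < r ∧ wFun n E r = ⊤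
  · exfalso
    obtain ⟨r, hr, htop⟩ := hcase
    have hsub : (psi n) ⁻¹' ((closedBall (0:Euc (n+1)) |r|) ×ˢ (Set.univ : Set ℝ)) ⊆ E := by
      intro x hx
      rw [Set.mem_preimage, psi_apply] at hx
      rw [mem_iff_struct hE]
      have hle : wFun n E r ≤ wFun n E ‖projHead (n+2) x‖ := by
        apply wFun_anti
        rw [abs_norm]
        have := hx.1
        rwa [mem_closedBall, dist_zero_right] at this
      rw [htop, top_le_iff] at hle
      rw [hle]
      exact ⟨ENNReal.zero_lt_top, le_top⟩
    have hbig := measure_mono (μ := (volume : Measure (Euc (n+2)))) hsub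
    rw [vol_pre _ ((measurableSet_closedBall.prod MeasurableSet.univ).nullMeasurableSet),
      Measure.volume_eq_prod, Measure.prod_prod, Real.volume_univ,
      ENNReal.mul_top (measure_closedBall_pos volume 0 (abs_pos.mpr hr.ne')).ne'] at hbig
    rw [top_le_iff, hvol] at hbig
    exact (measure_closedBall_lt_top).ne hbig
  · push_neg at hcase
    refine measure_mono_null (?_ : _ ⊆ (psi n) ⁻¹' ((({0}: Set (Euc (n+1)))) ×ˢ (Set.univ : Set ℝ))) ?_
    · intro x hx
      rw [Set.mem_preimage, psi_apply]
      refine ⟨?_, trivial⟩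
      simp only [Set.mem_singleton_iff]
      by_contra hne
      have hpos : 0 < ‖projHead (n+2) x‖ := norm_pos_iff.mpr hne
      exact (hcase _ hpos) hx
    · rw [vol_pre _ (((measurableSet_singleton _).prod MeasurableSet.univ).nullMeasurableSet),
        Measure.volume_eq_prod, Measure.prod_prod]
      have h0 : volume ({0} : Set (Euc (n+1))) = 0 := by
        rw [← Metric.sphere_zero]
        exact Measure.addHaar_sphere volume 0 0
      rw [h0, zero_mul]

lemma exists_subseq_conv (W : ℕ → ℚ → ℝ≥0∞) :
    ∃ (t : ℕ → ℕ) (g : ℚ → ℝ≥0∞), StrictMono t ∧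
      ∀ q, Tendsto (fun m => W (t m) q) atTop (𝓝 (g q)) := by
  obtain ⟨g, -, t, ht, htend⟩ := isCompact_univ.tendsto_subseq (x := W)
    (fun _ => Set.mem_univ _)
  exact ⟨t, g, ht, fun q => tendsto_pi_nhds.mp htend q⟩

def wLim (g : ℚ → ℝ≥0∞) (r : ℝ) : ℝ≥0∞ := ⨆ q : {q : ℚ // r < (q:ℝ)}, g q
def wLimL (g : ℚ → ℝ≥0∞) (r : ℝ) : ℝ≥0∞ := ⨅ q : {q : ℚ // 0 < (q:ℝ) ∧ (q:ℝ) < r}, g q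
def jumpSet (g : ℚ → ℝ≥0∞) : Set ℝ := {r | 0 < r ∧ wLim g r < wLimL g r}

lemma wLim_anti (g : ℚ → ℝ≥0∞) : Antitone (wLim g) := fun a b hab =>
  iSup_le fun q => le_iSup_of_le ⟨q, lt_of_le_of_lt hab q.2⟩ le_rfl

lemma jumpSet_key (g : ℚ → ℝ≥0∞) {a b : ℝ} (ha : a ∈ jumpSet g) (hab : a < b) :
    wLimL g b ≤ wLim g a := by
  obtain ⟨q, hq1, hq2⟩ := exists_rat_btwn hab
  have h1 : (g q) ≤ wLim g a := le_iSup_of_le ⟨q, hq1⟩ le_rfl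
  have h2 : wLimL g b ≤ g q := iInf_le_of_le ⟨q, ha.1.trans hq1, hq2⟩ le_rfl
  exact h2.trans h1

lemma jumpSet_countable (g : ℚ → ℝ≥0∞) : (jumpSet g).Countable := by
  have hsel : ∀ r ∈ jumpSet g, ∃ q : ℚ,
      wLim g r < (Real.toNNReal q : ℝ≥0∞) ∧ (Real.toNNReal q : ℝ≥0∞) < wLimL g r := by
    intro r hr
    obtain ⟨q, -, h1, h2⟩ := ENNReal.lt_iff_exists_rat_btwn.mp hr.2
    exact ⟨q, h1, h2⟩
  choose! f hf1 hf2 using hsel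
  have hkey : ∀ a ∈ jumpSet g, ∀ b ∈ jumpSet g, a < b → f b < f a := by
    intro a ha b hb hab
    have h3 : (Real.toNNReal (f b) : ℝ≥0∞) < (Real.toNNReal (f a) : ℝ≥0∞) :=
      lt_of_lt_of_le (hf2 b hb) (le_trans (jumpSet_key g ha hab) (le_of_lt (hf1 a ha)))
    by_contra hc
    push_neg at hc
    have h4 : Real.toNNReal (f a) ≤ Real.toNNReal (f b) :=
      Real.toNNReal_mono (by exact_mod_cast hc)
    exact absurd (ENNReal.coe_le_coe.mpr h4) (not_le.mpr h3)
  have hinj : Set.InjOn f (jumpSet g) := by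
    intro a ha b hb hfe
    by_contra hne
    rcases lt_or_gt_of_ne hne with h | h
    · exact (ne_of_lt (hkey a ha b hb h)) hfe.symm
    · exact (ne_of_lt (hkey b hb a ha h)) hfe
  exact ((Set.mapsTo_univ f (jumpSet g)).countable_of_injOn hinj) Set.countable_univ

lemma tendsto_wLim {W : ℕ → ℝ → ℝ≥0∞} (hanti : ∀ m, ∀ a b : ℝ, 0 ≤ a → a ≤ b → W m b ≤ W m a)
    {g : ℚ → ℝ≥0∞} (hg : ∀ q : ℚ, Tendsto (fun m => W m q) atTop (𝓝 (g q)))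
    {r : ℝ} (hr : 0 < r) (hjump : r ∉ jumpSet g) :
    Tendsto (fun m => W m r) atTop (𝓝 (wLim g r)) := by
  have hliminf : wLim g r ≤ liminf (fun m => W m r) atTop := by
    apply iSup_le
    rintro ⟨q, hq⟩
    calc g q = liminf (fun m => W m q) atTop := ((hg q).liminf_eq).symm
      _ ≤ liminf (fun m => W m r) atTop :=
        liminf_le_liminf (Eventually.of_forall fun m => hanti m r q hr.le hq.le)
  have hlimsup : limsup (fun m => W m r) atTop ≤ wLimL g r := by
    apply le_iInf
    rintro ⟨q, hq0, hqr⟩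
    calc limsup (fun m => W m r) atTop ≤ limsup (fun m => W m q) atTop :=
        limsup_le_limsup (Eventually.of_forall fun m => hanti m q r hq0.le hqr.le)
      _ = g q := (hg q).limsup_eq
  have hL : wLimL g r ≤ wLim g r := not_lt.mp fun h => hjump ⟨hr, h⟩
  have hbb : liminf (fun m => W m r) atTop ≤ limsup (fun m => W m r) atTop :=
    liminf_le_limsup
  have h1 : limsup (fun m => W m r) atTop = wLim g r :=
    le_antisymm (hlimsup.trans hL) (hliminf.trans hbb)
  have h2 : liminf (fun m => W m r) atTop = wLim g r :=
    le_antisymm (hbb.trans h1.le) hliminf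
  exact tendsto_of_liminf_eq_limsup h2 h1


lemma line_null (c : ℝ≥0∞) : volume {t : ℝ | ENNReal.ofReal (2*|t|) = c} = 0 := by
  rcases eq_or_ne c ⊤ with rfl | hc
  · have he : {t : ℝ | ENNReal.ofReal (2*|t|) = ⊤} = ∅ := by
      ext t
      simp [ENNReal.mul_eq_top]
    rw [he, measure_empty]
  · refine measure_mono_null
      (?_ : _ ⊆ ({c.toReal/2, -(c.toReal/2)} : Set ℝ)) ?_
    · intro x hx
      have h1 : 2*|x| = c.toReal := by
        have h2 := congrArg ENNReal.toReal hx
        rwa [ENNReal.toReal_ofReal (by positivity)] at h2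
      have h3 : |x| = c.toReal/2 := by linarith
      rcases (abs_eq (by positivity)).mp h3 with h | h
      · exact Or.inl h
      · exact Or.inr h
    · exact Set.Finite.measure_zero ((Set.finite_singleton _).insert _) volume

end
end AuxSP

/-- Lemma 5.6: precompactness of uniformly layered doubly symmetric sets. -/
theorem sstar_precompactness (d : ℕ) (hd : 2 ≤ d)
    (φ : ℕ → ℝ) (hφpos : ∀ K, 0 < φ K) (hφ : Tendsto φ atTop (nhds 0))
    (ϱ : ℕ → ℝ) (hϱpos : ∀ ν, 0 < ϱ ν) (hϱ : Tendsto ϱ atTop (nhds 0))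
    (E : ℕ → Set (Euc d)) (hmeas : ∀ ν, MeasurableSet (E ν))
    (hsym : ∀ ν, E ν = dagStar d (E ν))
    (hvol : ∀ ν, volume (E ν) = volume (Metric.closedBall (0 : Euc d) 1))
    (hbd : ∀ (ν : ℕ) (K : ℕ), (∑' k : ℤ, (if (K : ℤ) < |k| then volume (layer' d (E ν) k) else 0))
        ≤ ENNReal.ofReal (φ K + ϱ ν)) :
    ∀ s : ℕ → ℕ, StrictMono s →
      ∃ t : ℕ → ℕ, StrictMono t ∧
        ∃ F : Set (Euc d), MeasurableSet F ∧
          Tendsto (fun m => volume (symmDiff (E (s (t m))) F)) atTop (nhds 0) := by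
  obtain ⟨n, rfl⟩ : ∃ n, d = n + 2 := ⟨d - 2, by omega⟩
  intro s hs
  -- Helly-type extraction along rationals
  obtain ⟨t, g, ht, hg⟩ := exists_subseq_conv (fun ν q => wFun n (E (s ν)) q)
  refine ⟨t, ht, ?_⟩
  -- the limit function and the limit set
  set w : ℝ → ℝ≥0∞ := wLim g with hw
  set F : Set (Euc (n+2)) :=
    {x | 0 < w ‖projHead (n+2) x‖ ∧
      ENNReal.ofReal (2 * |lastC (n+2) x|) ≤ w ‖projHead (n+2) x‖} with hF
  -- measurability preliminaries
  haveI : Nontrivial (Euc (n+1)) := by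
    apply Module.nontrivial_of_finrank_pos (R := ℝ)
    rw [finrank_euclideanSpace_fin]; omega
  have hproj : Measurable (projHead (n+2)) := by
    have hfe : projHead (n+2) = fun x => (psi n x).1 := funext fun x => by rw [psi_apply]
    rw [hfe]; exact measurable_fst.comp (psi n).measurable
  have hlast : Measurable (lastC (n+2)) := by
    have hfe : lastC (n+2) = fun x => (psi n x).2 := funext fun x => by rw [psi_apply]
    rw [hfe]; exact measurable_snd.comp (psi n).measurable
  have hwnorm : Measurable fun x : Euc (n+2) => w ‖projHead (n+2) x‖ :=
    ((wLim_anti g).measurable).comp (continuous_norm.measurable.comp hproj)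
  have hoflast : Measurable fun x : Euc (n+2) => ENNReal.ofReal (2 * |lastC (n+2) x|) :=
    ENNReal.measurable_ofReal.comp ((hlast.abs).const_mul 2)
  have hFmeas : MeasurableSet F := by
    rw [hF]
    have : {x : Euc (n+2) | 0 < w ‖projHead (n+2) x‖ ∧
        ENNReal.ofReal (2 * |lastC (n+2) x|) ≤ w ‖projHead (n+2) x‖}
        = {x | (0:ℝ≥0∞) < w ‖projHead (n+2) x‖} ∩
          {x | ENNReal.ofReal (2 * |lastC (n+2) x|) ≤ w ‖projHead (n+2) x‖} := rfl
    rw [this]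
    exact (measurableSet_lt measurable_const hwnorm).inter (measurableSet_le hoflast hwnorm)
  refine ⟨F, hFmeas, ?_⟩
  -- antitonicity of the slice functions
  have hanti : ∀ m, ∀ a b : ℝ, 0 ≤ a → a ≤ b →
      wFun n (E (s (t m))) b ≤ wFun n (E (s (t m))) a := by
    intro m a b ha hab
    exact wFun_anti (by rw [abs_of_nonneg ha, abs_of_nonneg (ha.trans hab)]; exact hab)
  -- pointwise eventual agreement off a null set
  have hgood : ∀ x : Euc (n+2), ‖projHead (n+2) x‖ ∉ jumpSet g →
      0 < ‖projHead (n+2) x‖ →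
      ENNReal.ofReal (2 * |lastC (n+2) x|) ≠ w ‖projHead (n+2) x‖ →
      ∀ᶠ m in atTop, (x ∈ E (s (t m)) ↔ x ∈ F) := by
    intro x hj hrpos hne
    have htd : Tendsto (fun m => wFun n (E (s (t m))) ‖projHead (n+2) x‖) atTop
        (𝓝 (w ‖projHead (n+2) x‖)) :=
      tendsto_wLim (W := fun m r => wFun n (E (s (t m))) r) hanti (fun q => hg q) hrpos hj
    rcases lt_or_gt_of_ne hne with hlt | hgt
    · filter_upwards [htd (Ioi_mem_nhds hlt)] with m hm
      have hm' : ENNReal.ofReal (2 * |lastC (n+2) x|)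
          < wFun n (E (s (t m))) ‖projHead (n+2) x‖ := hm
      constructor
      · intro _
        exact ⟨zero_le.trans_lt hlt, hlt.le⟩
      · intro _
        exact (mem_iff_struct (hsym _) x).mpr ⟨zero_le.trans_lt hm', hm'.le⟩
    · filter_upwards [htd (Iio_mem_nhds hgt)] with m hm
      have hm' : wFun n (E (s (t m))) ‖projHead (n+2) x‖
          < ENNReal.ofReal (2 * |lastC (n+2) x|) := hm
      constructor
      · intro hxE
        exact absurd ((mem_iff_struct (hsym _) x).mp hxE).2 (not_le.mpr hm')
      · intro hxF
        exact absurd hxF.2 (not_le.mpr hgt)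
  -- the bad set is null
  have hnull : ∀ᵐ x : Euc (n+2), ∀ᶠ m in atTop, (x ∈ E (s (t m)) ↔ x ∈ F) := by
    have hA : volume ((psi n) ⁻¹'
        ((⋃ r ∈ (jumpSet g ∪ {0} : Set ℝ), sphere (0 : Euc (n+1)) r) ×ˢ
          (Set.univ : Set ℝ))) = 0 := by
      have hcnt : (jumpSet g ∪ {0} : Set ℝ).Countable :=
        (jumpSet_countable g).union (Set.countable_singleton 0)
      have hmeasS : MeasurableSet (⋃ r ∈ (jumpSet g ∪ {0} : Set ℝ), sphere (0 : Euc (n+1)) r) :=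
        MeasurableSet.biUnion hcnt (fun r _ => isClosed_sphere.measurableSet)
      rw [vol_pre _ ((hmeasS.prod MeasurableSet.univ).nullMeasurableSet),
        Measure.volume_eq_prod, Measure.prod_prod]
      have h0 : volume (⋃ r ∈ (jumpSet g ∪ {0} : Set ℝ), sphere (0 : Euc (n+1)) r) = 0 :=
        (measure_biUnion_null_iff hcnt).mpr fun r _ => Measure.addHaar_sphere volume 0 r
      rw [h0, zero_mul]
    have hB : volume ((psi n) ⁻¹'
        {p : Euc (n+1) × ℝ | ENNReal.ofReal (2 * |p.2|) = w ‖p.1‖}) = 0 := by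
      have hm1 : Measurable fun p : Euc (n+1) × ℝ => ENNReal.ofReal (2 * |p.2|) :=
        ENNReal.measurable_ofReal.comp ((measurable_snd.abs).const_mul 2)
      have hm2 : Measurable fun p : Euc (n+1) × ℝ => w ‖p.1‖ :=
        ((wLim_anti g).measurable).comp (continuous_norm.measurable.comp measurable_fst)
      have hmeasS : MeasurableSet {p : Euc (n+1) × ℝ | ENNReal.ofReal (2 * |p.2|) = w ‖p.1‖} := by
        have : {p : Euc (n+1) × ℝ | ENNReal.ofReal (2 * |p.2|) = w ‖p.1‖}
            = {p | ENNReal.ofReal (2 * |p.2|) ≤ w ‖p.1‖} ∩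
              {p | w ‖p.1‖ ≤ ENNReal.ofReal (2 * |p.2|)} := by
          ext p; simp only [Set.mem_setOf_eq, Set.mem_inter_iff]
          constructor
          · intro h; exact ⟨le_of_eq h, ge_of_eq h⟩
          · intro h; exact le_antisymm h.1 h.2
        rw [this]
        exact (measurableSet_le hm1 hm2).inter (measurableSet_le hm2 hm1)
      rw [vol_pre _ hmeasS.nullMeasurableSet, Measure.volume_eq_prod]
      rw [Measure.measure_prod_null hmeasS]
      exact Filter.Eventually.of_forall fun x' => line_null (w ‖x'‖)
    refine measure_mono_null ?_ (measure_union_null hA hB)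
    intro x hx
    simp only [Set.mem_setOf_eq] at hx
    by_cases h1 : ‖projHead (n+2) x‖ ∈ jumpSet g ∪ ({0} : Set ℝ)
    · left
      rw [Set.mem_preimage, psi_apply]
      refine ⟨Set.mem_biUnion h1 ?_, trivial⟩
      rw [mem_sphere_zero_iff_norm]
    · by_cases h2 : ENNReal.ofReal (2 * |lastC (n+2) x|) = w ‖projHead (n+2) x‖
      · right
        rw [Set.mem_preimage, psi_apply]
        exact h2
      · exfalso
        apply hx
        apply hgood x (fun hj => h1 (Or.inl hj)) ?_ h2
        rcases (norm_nonneg (projHead (n+2) x)).lt_or_eq with hpos | hzero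
        · exact hpos
        · exact absurd (Or.inr (show ‖projHead (n+2) x‖ ∈ ({0}:Set ℝ) from hzero.symm)) h1
  -- main convergence
  rw [ENNReal.tendsto_atTop_zero]
  intro ε hε
  obtain ⟨δ, hδpos, hδε⟩ : ∃ δ : ℝ, 0 < δ ∧ ENNReal.ofReal δ ≤ ε := by
    rcases eq_or_ne ε ⊤ with rfl | hne
    · exact ⟨1, one_pos, le_top⟩
    · exact ⟨ε.toReal, ENNReal.toReal_pos hε.ne' hne,
        le_of_eq (ENNReal.ofReal_toReal hne)⟩
  obtain ⟨K, hK⟩ : ∃ K : ℕ, φ K < δ/8 :=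
    (hφ.eventually_lt_const (show (0:ℝ) < δ/8 by positivity)).exists
  -- the compact box
  set B := volume (Metric.closedBall (0 : Euc (n+2)) 1) with hB
  set Bn := volume (Metric.closedBall (0 : Euc (n+1)) 1) with hBn
  set Cden := Bn * ENNReal.ofReal ((2:ℝ)^(-(K:ℤ)-1)) with hCden
  have hCden0 : Cden ≠ 0 :=
    mul_ne_zero (measure_closedBall_pos volume 0 one_pos).ne'
      (ENNReal.ofReal_pos.mpr (by positivity)).ne'
  have hCdentop : Cden ≠ ⊤ :=
    ENNReal.mul_ne_top measure_closedBall_lt_top.ne ENNReal.ofReal_ne_top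
  set M := B / Cden with hM
  have hMtop : M ≠ ⊤ := (ENNReal.div_lt_top measure_closedBall_lt_top.ne hCden0).ne
  set R : ℝ := max 1 (M.toReal + 1) with hRdef
  set T : ℝ := (2:ℝ)^(K:ℤ) with hT
  set Q : Set (Euc (n+2)) :=
    (psi n) ⁻¹' ((closedBall (0:Euc (n+1)) R) ×ˢ (Set.Icc (-T) T)) with hQ
  have hQmeas : MeasurableSet Q :=
    (psi n).measurable (measurableSet_closedBall.prod measurableSet_Icc)
  have hQvol : volume Q ≠ ⊤ := by
    rw [hQ, vol_pre _ ((measurableSet_closedBall.prod measurableSet_Icc).nullMeasurableSet),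
      Measure.volume_eq_prod, Measure.prod_prod]
    exact (ENNReal.mul_lt_top measure_closedBall_lt_top
      (by rw [Real.volume_Icc]; exact ENNReal.ofReal_lt_top)).ne
  -- radius bound
  have hR : ∀ ν : ℕ, ∀ r : ℝ, ENNReal.ofReal ((2:ℝ)^(-(K:ℤ)-1)) ≤ wFun n (E ν) r → |r| ≤ R := by
    intro ν r hwle
    by_contra hcon
    push_neg at hcon
    have hu : (0:ℝ) < (2:ℝ)^(-(K:ℤ)-2) := by positivity
    have h2u : (2:ℝ) * (2:ℝ)^(-(K:ℤ)-2) = (2:ℝ)^(-(K:ℤ)-1) := by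
      rw [show (-(K:ℤ)-1) = 1 + (-(K:ℤ)-2) by ring, zpow_add₀ (two_ne_zero), zpow_one]
    have hbound := wFun_large_bound (hsym ν) (hvol ν) hu (by rw [h2u]; exact hwle)
    rw [h2u] at hbound
    have hle : ENNReal.ofReal (|r|^(n+1)) ≤ M := by
      rw [hM, ENNReal.le_div_iff_mul_le (Or.inl hCden0) (Or.inl hCdentop), hCden, ← mul_assoc]
      exact hbound
    have hle' : |r| ^ (n+1) ≤ M.toReal := by
      rw [ENNReal.ofReal_le_iff_le_toReal hMtop] at hle
      exact hle
    have h1R : 1 ≤ |r| := le_trans (le_max_left _ _) hcon.le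
    have hpow : |r| ≤ |r|^(n+1) := le_self_pow₀ h1R (by omega)
    have : M.toReal + 1 ≤ |r| := le_trans (le_max_right _ _) hcon.le
    linarith
  -- tail bound
  have hTail : ∀ ν : ℕ, volume (E ν \ Q) ≤ ENNReal.ofReal (φ K + ϱ ν) := by
    intro ν
    have hsubset : E ν \ Q ⊆
        (⋃ k : ℤ, if (K:ℤ) < |k| then layer' (n+2) (E ν) k else ∅) ∪
          {x : Euc (n+2) | wFun n (E ν) ‖projHead (n+2) x‖ = ⊤} := by
      rintro x ⟨hxE, hxQ⟩
      rcases eq_or_ne (wFun n (E ν) ‖projHead (n+2) x‖) ⊤ with htop | hnetop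
      · exact Or.inr htop
      have hmem := (mem_iff_struct (hsym ν) x).mp hxE
      obtain ⟨k, hk1, hk2⟩ := ENNReal.exists_mem_Ico_zpow (y := (2:ℝ≥0∞))
        hmem.1.ne' hnetop (by norm_num) (by norm_num)
      have hlayer : x ∈ layer' (n+2) (E ν) (k+1) := by
        refine ⟨hxE, ?_, ?_⟩
        · rw [vol_sliceV (hsym ν), show (k+1-1 : ℤ) = k by ring, ofReal_two_zpow]
          exact hk1
        · rw [vol_sliceV (hsym ν), ofReal_two_zpow]
          exact hk2
      have hknotQ : ¬(‖projHead (n+2) x‖ ≤ R ∧ |lastC (n+2) x| ≤ T) := by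
        intro hcontr
        apply hxQ
        rw [hQ, Set.mem_preimage, psi_apply]
        exact ⟨by rw [mem_closedBall, dist_zero_right]; exact hcontr.1,
          Set.mem_Icc.mpr (abs_le.mp hcontr.2)⟩
      have hKk : (K:ℤ) < |k+1| := by
        by_cases hr : ‖projHead (n+2) x‖ ≤ R
        · have ht' : T < |lastC (n+2) x| := by
            by_contra hc
            push_neg at hc
            exact hknotQ ⟨hr, hc⟩
          have hTle : ENNReal.ofReal ((2:ℝ)^((K:ℤ)+1)) ≤ wFun n (E ν) ‖projHead (n+2) x‖ := by
            refine le_trans (ENNReal.ofReal_le_ofReal ?_) hmem.2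
            rw [show ((K:ℤ)+1) = 1 + (K:ℤ) by ring, zpow_add₀ (two_ne_zero), zpow_one]
            have := abs_nonneg (lastC (n+2) x)
            have hTpos : (0:ℝ) < T := by rw [hT]; positivity
            nlinarith
          rw [ofReal_two_zpow] at hTle
          have hlt : (2:ℝ≥0∞)^((K:ℤ)+1) < 2^(k+1) := lt_of_le_of_lt hTle hk2
          have hKk1 : (K:ℤ)+1 < k+1 := by
            by_contra hcc
            push_neg at hcc
            exact absurd (ENNReal.zpow_le_of_le one_le_two hcc) (not_le.mpr hlt)
          rw [abs_of_pos (by omega)]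
          omega
        · push_neg at hr
          have hsmall : ¬ ENNReal.ofReal ((2:ℝ)^(-(K:ℤ)-1))
              ≤ wFun n (E ν) ‖projHead (n+2) x‖ := by
            intro hcc
            have := hR ν _ hcc
            rw [abs_norm] at this
            exact absurd this (not_le.mpr hr)
          rw [not_le, ofReal_two_zpow] at hsmall
          have hlt2 : (2:ℝ≥0∞)^k < 2^(-(K:ℤ)-1) := lt_of_le_of_lt hk1 hsmall
          have hkK : k < -(K:ℤ)-1 := by
            by_contra hcc
            push_neg at hcc
            exact absurd (ENNReal.zpow_le_of_le one_le_two hcc) (not_le.mpr hlt2)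
          rw [abs_of_neg (by omega)]
          omega
      refine Or.inl (Set.mem_iUnion.mpr ⟨k+1, ?_⟩)
      rw [if_pos hKk]
      exact hlayer
    calc volume (E ν \ Q)
        ≤ volume ((⋃ k : ℤ, if (K:ℤ) < |k| then layer' (n+2) (E ν) k else ∅)) +
          volume {x : Euc (n+2) | wFun n (E ν) ‖projHead (n+2) x‖ = ⊤} :=
          le_trans (measure_mono hsubset) (measure_union_le _ _)
      _ = volume ((⋃ k : ℤ, if (K:ℤ) < |k| then layer' (n+2) (E ν) k else ∅)) := by
          rw [wFun_infty_null (hsym ν) (hvol ν), add_zero]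
      _ ≤ ∑' k : ℤ, volume (if (K:ℤ) < |k| then layer' (n+2) (E ν) k else ∅) :=
          measure_iUnion_le _
      _ = ∑' k : ℤ, (if (K:ℤ) < |k| then volume (layer' (n+2) (E ν) k) else 0) := by
          congr 1
          funext k
          split
          · rfl
          · exact measure_empty
      _ ≤ ENNReal.ofReal (φ K + ϱ ν) := hbd ν K
  -- the Q-part tends to zero
  have hQpart : Tendsto (fun m => volume (symmDiff (E (s (t m))) F ∩ Q)) atTop (𝓝 0) := by
    have hmeas' : ∀ m, MeasurableSet (symmDiff (E (s (t m))) F ∩ Q) :=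
      fun m => ((hmeas _).symmDiff hFmeas).inter hQmeas
    have heq : ∀ m, volume (symmDiff (E (s (t m))) F ∩ Q)
        = ∫⁻ x, (symmDiff (E (s (t m))) F ∩ Q).indicator (1 : Euc (n+2) → ℝ≥0∞) x := by
      intro m
      rw [lintegral_indicator_one (hmeas' m)]
    simp only [heq]
    have h0 : (0:ℝ≥0∞) = ∫⁻ _x : Euc (n+2), 0 := lintegral_zero.symm
    rw [h0]
    apply tendsto_lintegral_of_dominated_convergence (bound := (Q.indicator (1 : Euc (n+2) → ℝ≥0∞)))
    · exact fun m => (measurable_const.indicator (hmeas' m))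
    · intro m
      refine Filter.Eventually.of_forall fun x => ?_
      exact Set.indicator_le_indicator_of_subset Set.inter_subset_right (fun _ => zero_le) x
    · rw [lintegral_indicator_one hQmeas]
      exact hQvol
    · filter_upwards [hnull] with x hx
      have : ∀ᶠ m in atTop,
          (symmDiff (E (s (t m))) F ∩ Q).indicator (1 : Euc (n+2) → ℝ≥0∞) x = 0 := by
        filter_upwards [hx] with m hm
        apply Set.indicator_of_notMem
        rintro ⟨hsd, -⟩
        rw [Set.mem_symmDiff] at hsd
        rcases hsd with ⟨h1, h2⟩ | ⟨h1, h2⟩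
        · exact h2 (hm.mp h1)
        · exact h2 (hm.mpr h1)
      exact Tendsto.congr' (this.mono fun m hm => hm.symm) tendsto_const_nhds
  -- the F tail
  have hFtail : volume (F \ Q) ≤ ENNReal.ofReal (φ K) := by
    have hFQmeas : MeasurableSet (F \ Q) := hFmeas.diff hQmeas
    have hmE : ∀ m, MeasurableSet (E (s (t m)) \ Q) := fun m => (hmeas _).diff hQmeas
    have step1 : volume (F \ Q) ≤ liminf (fun m => volume (E (s (t m)) \ Q)) atTop := by
      have heq : ∀ m, volume (E (s (t m)) \ Q)
          = ∫⁻ x, (E (s (t m)) \ Q).indicator (1 : Euc (n+2) → ℝ≥0∞) x :=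
        fun m => (lintegral_indicator_one (hmE m)).symm
      calc volume (F \ Q) = ∫⁻ x, (F \ Q).indicator (1 : Euc (n+2) → ℝ≥0∞) x :=
            (lintegral_indicator_one hFQmeas).symm
        _ ≤ ∫⁻ x, liminf (fun m => (E (s (t m)) \ Q).indicator (1 : Euc (n+2) → ℝ≥0∞) x) atTop := by
            apply lintegral_mono_ae
            filter_upwards [hnull] with x hx
            by_cases hxF : x ∈ F \ Q
            · rw [Set.indicator_of_mem hxF]
              have hev : ∀ᶠ m in atTop,
                  (E (s (t m)) \ Q).indicator (1 : Euc (n+2) → ℝ≥0∞) x = 1 := by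
                filter_upwards [hx] with m hm
                exact Set.indicator_of_mem
                  (show x ∈ E (s (t m)) \ Q from ⟨hm.mpr hxF.1, hxF.2⟩) _
              have : liminf (fun m => (E (s (t m)) \ Q).indicator (1 : Euc (n+2) → ℝ≥0∞) x) atTop
                  = liminf (fun _ : ℕ => (1:ℝ≥0∞)) atTop :=
                liminf_congr hev
              rw [this, liminf_const]
              simp
            · rw [Set.indicator_of_notMem hxF]
              exact zero_le
        _ ≤ liminf (fun m => ∫⁻ x, (E (s (t m)) \ Q).indicator (1 : Euc (n+2) → ℝ≥0∞) x) atTop :=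
            lintegral_liminf_le (fun m => measurable_const.indicator (hmE m))
        _ = liminf (fun m => volume (E (s (t m)) \ Q)) atTop := by
            apply liminf_congr
            exact Filter.Eventually.of_forall fun m => (heq m).symm
    refine le_trans step1 ?_
    have hlim : Tendsto (fun m => ENNReal.ofReal (φ K + ϱ (s (t m)))) atTop
        (𝓝 (ENNReal.ofReal (φ K + 0))) := by
      apply ENNReal.tendsto_ofReal
      exact (tendsto_const_nhds).add (hϱ.comp ((hs.comp ht).tendsto_atTop))
    rw [add_zero] at hlim
    calc liminf (fun m => volume (E (s (t m)) \ Q)) atTop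
        ≤ liminf (fun m => ENNReal.ofReal (φ K + ϱ (s (t m)))) atTop :=
          liminf_le_liminf (Filter.Eventually.of_forall fun m => hTail (s (t m)))
      _ = ENNReal.ofReal (φ K) := hlim.liminf_eq
  -- conclusion
  have hsplit : ∀ m, volume (symmDiff (E (s (t m))) F)
      ≤ volume (symmDiff (E (s (t m))) F ∩ Q) + (volume (E (s (t m)) \ Q) + volume (F \ Q)) := by
    intro m
    have hsub : symmDiff (E (s (t m))) F ⊆
        (symmDiff (E (s (t m))) F ∩ Q) ∪ ((E (s (t m)) \ Q) ∪ (F \ Q)) := by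
      intro x hx
      by_cases hxQ : x ∈ Q
      · exact Or.inl ⟨hx, hxQ⟩
      · rw [Set.mem_symmDiff] at hx
        rcases hx with ⟨h1, -⟩ | ⟨h1, -⟩
        · exact Or.inr (Or.inl ⟨h1, hxQ⟩)
        · exact Or.inr (Or.inr ⟨h1, hxQ⟩)
    exact le_trans (measure_mono hsub)
      (le_trans (measure_union_le _ _) (by gcongr; exact measure_union_le _ _))
  have hev1 : ∀ᶠ m in atTop, volume (symmDiff (E (s (t m))) F ∩ Q) ≤ ENNReal.ofReal (δ/8) := by
    obtain ⟨N, hN⟩ := (ENNReal.tendsto_atTop_zero.mp hQpart) (ENNReal.ofReal (δ/8))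
      (ENNReal.ofReal_pos.mpr (by positivity))
    exact eventually_atTop.mpr ⟨N, hN⟩
  have hev2 : ∀ᶠ m in atTop, ϱ (s (t m)) < δ/8 :=
    (hϱ.comp ((hs.comp ht).tendsto_atTop)) (Iio_mem_nhds (by positivity))
  have hfinal : ∀ᶠ m in atTop, volume (symmDiff (E (s (t m))) F) ≤ ε := by
    filter_upwards [hev1, hev2] with m h1 h2
    have h3 : volume (E (s (t m)) \ Q) ≤ ENNReal.ofReal (δ/8 + δ/8) :=
      le_trans (hTail (s (t m))) (ENNReal.ofReal_le_ofReal (by linarith [hK]))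
    have h4 : volume (F \ Q) ≤ ENNReal.ofReal (δ/8) :=
      le_trans hFtail (ENNReal.ofReal_le_ofReal (by linarith [hK]))
    calc volume (symmDiff (E (s (t m))) F)
        ≤ volume (symmDiff (E (s (t m))) F ∩ Q) +
          (volume (E (s (t m)) \ Q) + volume (F \ Q)) := hsplit m
      _ ≤ ENNReal.ofReal (δ/8) + (ENNReal.ofReal (δ/8 + δ/8) + ENNReal.ofReal (δ/8)) := by
          gcongr
      _ ≤ ENNReal.ofReal δ := by
          rw [← ENNReal.ofReal_add (by positivity) (by positivity),
            ← ENNReal.ofReal_add (by positivity) (by positivity)]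
          exact ENNReal.ofReal_le_ofReal (by linarith)
      _ ≤ ε := hδε
  obtain ⟨N, hN⟩ := eventually_atTop.mp hfinal
  exact ⟨N, hN⟩
end
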